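/- arXiv:2301.12426 — 4 statements merged into one kernel-verified Lean document; each statement's English description precedes it below -/
import Mathlib

section
/- Every sparse word is an isoterm for the monoid IC_4: if w is a sparse word and IC_4 satisfies the identity w ≈ v for some word v, then v = w. -/
/-! ### Identities and finite bases -/

/-- A semigroup `S` satisfies the identity `u ≈ v` (for words `u`, `v` in the free semigroup on
the countably infinite set of variables `ℕ`) if every homomorphism from the free semigroup to
`S` — equivalently, every substitution `f : ℕ → S` — equalizes `u` and `v`. -/
def Satisfies (S : Type*) [Semigroup S] (u v : FreeSemigroup ℕ) : Prop :=
  ∀ f : ℕ → S, FreeSemigroup.lift f u = FreeSemigroup.lift f v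

/-- A semigroup is finitely based if there is a finite set of identities it satisfies such that
every semigroup satisfying those identities satisfies every identity of `S`. -/
def FinitelyBased (S : Type*) [Semigroup S] : Prop :=
  ∃ B : Finset (FreeSemigroup ℕ × FreeSemigroup ℕ),
    (∀ p ∈ B, Satisfies S p.1 p.2) ∧
    ∀ (T : Type) [Semigroup T], (∀ p ∈ B, Satisfies T p.1 p.2) →
      ∀ u v : FreeSemigroup ℕ, Satisfies S u v → Satisfies T u v

/-- `T` belongs to the variety generated by `S`: `T` satisfies every identity of `S`. -/
def InVarietyOf (T S : Type*) [Semigroup T] [Semigroup S] : Prop :=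
  ∀ u v : FreeSemigroup ℕ, Satisfies S u v → Satisfies T u v

/-! ### The i-Catalan monoids -/

/-- Partial maps of the chain `Fin m` (order-isomorphic to `1 < 2 < ⋯ < m`) that are injective,
order preserving and extensive; `toFun i = some j` means the map is defined at `i` with value
`j`, and `toFun i = none` means `i` is not in the domain. -/
structure ICmon (m : ℕ) where
  toFun : Fin m → Option (Fin m)
  inj' : ∀ i j a, toFun i = some a → toFun j = some a → i = j
  mono' : ∀ i j a b, i ≤ j → toFun i = some a → toFun j = some b → a ≤ b
  extv' : ∀ i a, toFun i = some a → i ≤ a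

namespace ICmon

@[ext] theorem ext {m : ℕ} {α β : ICmon m} (h : α.toFun = β.toFun) : α = β := by
  cases α; cases β; cases h; rfl

/-- Composition of partial maps, written left-to-right (`α * β` is "first `α`, then `β`"),
with the identity map as the unit. -/
instance (m : ℕ) : Monoid (ICmon m) where
  mul α β :=
    { toFun := fun i => (α.toFun i).bind β.toFun
      inj' := by
        intro i j a hi hj
        rcases Option.bind_eq_some_iff.mp hi with ⟨b, hb, hba⟩
        rcases Option.bind_eq_some_iff.mp hj with ⟨c, hc, hca⟩
        obtain rfl : b = c := β.inj' _ _ _ hba hca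
        exact α.inj' _ _ _ hb hc
      mono' := by
        intro i j a b hij hi hj
        rcases Option.bind_eq_some_iff.mp hi with ⟨p, hp, hpa⟩
        rcases Option.bind_eq_some_iff.mp hj with ⟨q, hq, hqb⟩
        exact β.mono' _ _ _ _ (α.mono' _ _ _ _ hij hp hq) hpa hqb
      extv' := by
        intro i a hi
        rcases Option.bind_eq_some_iff.mp hi with ⟨p, hp, hpa⟩
        exact le_trans (α.extv' _ _ hp) (β.extv' _ _ hpa) }
  one :=
    { toFun := fun i => some i
      inj' := by intro i j a hi hj; rw [Option.some_inj] at hi hj; rw [hi, hj]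
      mono' := by
        intro i j a b hij hi hj
        rw [Option.some_inj] at hi hj; subst hi; subst hj; exact hij
      extv' := by intro i a hi; rw [Option.some_inj] at hi; exact hi.le }
  mul_assoc α β γ := by
    ext1; funext i
    show ((α.toFun i).bind β.toFun).bind γ.toFun
        = (α.toFun i).bind fun b => (β.toFun b).bind γ.toFun
    cases α.toFun i <;> rfl
  one_mul α := by ext1; funext i; rfl
  mul_one α := by
    ext1; funext i
    show (α.toFun i).bind some = α.toFun i
    cases α.toFun i <;> rfl

end ICmon

/-- The 42-element i-Catalan monoid of all injective, order preserving and extensive partial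
maps of the 4-element chain. -/
abbrev IC4 := ICmon 4

/-! ### Combinatorics of words, viewed as lists of variables -/

/-- The list of letters of a word of the free semigroup. -/
def wToList (w : FreeSemigroup ℕ) : List ℕ := w.head :: w.tail

/-- The word of the free semigroup whose list of letters is the given (nonempty) list
(a junk value is returned on the empty list). -/
def wOfList : List ℕ → FreeSemigroup ℕ
  | [] => FreeSemigroup.of 0
  | a :: l => ⟨a, l⟩

/-- `restrict w X` is the word `w(X)` (possibly empty) obtained from `w` by deleting all
occurrences of variables not belonging to `X`. -/
noncomputable def restrict (w : List ℕ) (X : Set ℕ) : List ℕ :=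
  w.filter fun a => @decide (a ∈ X) (Classical.propDecidable _)

/-- The word `u` occurs as a factor of `w` at most once: there is at most one decomposition
`w = v' ++ u ++ v''`. -/
def FactorAtMostOnce (u w : List ℕ) : Prop :=
  ∀ p₁ s₁ p₂ s₂ : List ℕ, p₁ ++ u ++ s₁ = w → p₂ ++ u ++ s₂ = w → p₁ = p₂ ∧ s₁ = s₂

/-- Between any two occurrences (at positions `i < j`) of any variable `z` in `w` there occur
at least `n` pairwise distinct variables. -/
def DistinctBetween (n : ℕ) (w : List ℕ) : Prop :=
  ∀ (z i j : ℕ), i < j → w[i]? = some z → w[j]? = some z →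
    n ≤ ((w.take j).drop (i + 1)).toFinset.card

/-- A word is sparse if between any two occurrences of a repeated variable there is an
occurrence of some linear variable (i.e. a variable occurring exactly once in the word). -/
def Sparse (w : List ℕ) : Prop :=
  ∀ (z i j : ℕ), i < j → w[i]? = some z → w[j]? = some z →
    ∃ y, w.count y = 1 ∧ y ∈ (w.take j).drop (i + 1)

/-- The `j`-th power of a word, as a list. -/
def powerList (j : ℕ) (l : List ℕ) : List ℕ := (List.replicate j l).flatten

namespace IsotermIC4
open List

abbrev St := Fin 4

def runStep (f : ℕ → IC4) (s : Option St) (a : ℕ) : Option St := s.bind (f a).toFun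

def run (f : ℕ → IC4) (L : List ℕ) (s : Option St) : Option St := L.foldl (runStep f) s

@[simp] lemma run_nil (f : ℕ → IC4) (s : Option St) : run f [] s = s := rfl

lemma run_cons (f : ℕ → IC4) (a : ℕ) (L : List ℕ) (s : Option St) :
    run f (a :: L) s = run f L (runStep f s a) := rfl

lemma run_append (f : ℕ → IC4) (A B : List ℕ) (s : Option St) :
    run f (A ++ B) s = run f B (run f A s) := List.foldl_append ..

@[simp] lemma run_none (f : ℕ → IC4) (L : List ℕ) : run f L none = none := by
  induction L with
  | nil => rfl
  | cons a L ih => simpa [run_cons, runStep] using ih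

lemma run_fix {f : ℕ → IC4} {s : St} {L : List ℕ}
    (h : ∀ a ∈ L, (f a).toFun s = some s) : run f L (some s) = some s := by
  induction L with
  | nil => rfl
  | cons a L ih =>
    rw [run_cons]
    have ha := h a (by simp)
    have : runStep f (some s) a = some s := by simp [runStep, ha]
    rw [this]
    exact ih fun b hb => h b (by simp [hb])

lemma runSeg {f : ℕ → IC4} {s s' : St} {a : ℕ} (P R : List ℕ)
    (h : ∀ b ∈ P, (f b).toFun s = some s) (ha : (f a).toFun s = some s') :
    run f (P ++ a :: R) (some s) = run f R (some s') := by
  rw [run_append, run_fix h, run_cons]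
  simp [runStep, ha]

lemma runDead {f : ℕ → IC4} {s : St} {a : ℕ} (P R : List ℕ)
    (h : ∀ b ∈ P, (f b).toFun s = some s) (ha : (f a).toFun s = none) :
    run f (P ++ a :: R) (some s) = none := by
  rw [run_append, run_fix h, run_cons]
  simp [runStep, ha]

lemma one_toFun (i : St) : (1 : IC4).toFun i = some i := rfl

lemma mul_toFun (α β : IC4) (i : St) : (α * β).toFun i = (α.toFun i).bind β.toFun := rfl

lemma lift_toFun (f : ℕ → IC4) : ∀ (l : List ℕ) (a : ℕ) (s : St),
    (FreeSemigroup.lift f (⟨a, l⟩ : FreeSemigroup ℕ)).toFun s = run f (a :: l) (some s) := by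
  intro l
  induction l with
  | nil =>
    intro a s
    show (FreeSemigroup.lift f (FreeSemigroup.of a)).toFun s = _
    rw [FreeSemigroup.lift_of]
    rw [run_cons]
    show _ = run f [] ((some s).bind (f a).toFun)
    simp [runStep]
  | cons b l ih =>
    intro a s
    have hmul : (⟨a, b :: l⟩ : FreeSemigroup ℕ) = FreeSemigroup.of a * ⟨b, l⟩ := rfl
    rw [hmul, map_mul, FreeSemigroup.lift_of, mul_toFun]
    rw [run_cons]
    have : runStep f (some s) a = (f a).toFun s := by simp [runStep]
    rw [this]
    cases hfa : (f a).toFun s with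
    | none => simp
    | some s' => simpa using ih b s'

end IsotermIC4
namespace IsotermIC4

/-- {0↦1} -/
def eA : IC4 := ⟨![some 1, none, none, none], by decide, by decide, by decide⟩
/-- {1↦2} -/
def eB : IC4 := ⟨![none, some 2, none, none], by decide, by decide, by decide⟩
/-- {2↦3} -/
def eC : IC4 := ⟨![none, none, some 3, none], by decide, by decide, by decide⟩
/-- {0↦0,1↦2,3↦3} -/
def eX : IC4 := ⟨![some 0, some 2, none, some 3], by decide, by decide, by decide⟩
/-- {0↦0,2↦2,3↦3} -/
def eY : IC4 := ⟨![some 0, none, some 2, some 3], by decide, by decide, by decide⟩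
/-- {0↦0,2↦2} -/
def eD : IC4 := ⟨![some 0, none, some 2, none], by decide, by decide, by decide⟩
/-- {1↦2,3↦3} -/
def eE : IC4 := ⟨![none, some 2, none, some 3], by decide, by decide, by decide⟩
/-- {2↦2,3↦3} -/
def eF : IC4 := ⟨![none, none, some 2, some 3], by decide, by decide, by decide⟩
/-- {2↦2} -/
def eG : IC4 := ⟨![none, none, some 2, none], by decide, by decide, by decide⟩

end IsotermIC4
namespace IsotermIC4
open List

lemma mem_first_split {x : ℕ} {L : List ℕ} (h : x ∈ L) :
    ∃ A B, L = A ++ x :: B ∧ x ∉ A := by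
  induction L with
  | nil => simp at h
  | cons a L ih =>
    by_cases hax : a = x
    · exact ⟨[], L, by simp [hax], by simp⟩
    · have hxL : x ∈ L := by
        rcases List.mem_cons.mp h with h' | h'
        · exact absurd h'.symm hax
        · exact h'
      obtain ⟨A, B, rfl, hA⟩ := ih hxL
      refine ⟨a :: A, B, rfl, ?_⟩
      simp only [List.mem_cons, not_or]
      exact ⟨fun h' => hax h'.symm, hA⟩

lemma count_zero_parts {t : ℕ} {A B : List ℕ} (hc : (A ++ t :: B).count t = 1) :
    t ∉ A ∧ t ∉ B := by
  simp [List.count_append, List.count_cons] at hc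
  constructor <;> rw [← List.count_eq_zero] <;> omega

def Before (L : List ℕ) (x y : ℕ) : Prop := ∃ A B C, L = A ++ x :: (B ++ y :: C)

lemma before_cons {L : List ℕ} {x y p : ℕ} (h : Before L x y) : Before (p :: L) x y := by
  obtain ⟨A, B, C, rfl⟩ := h
  exact ⟨p :: A, B, C, rfl⟩

lemma before_uncons {L : List ℕ} {x y p : ℕ} (h : Before (p :: L) x y) (hx : x ≠ p) :
    Before L x y := by
  obtain ⟨A, B, C, hABC⟩ := h
  cases A with
  | nil => simp at hABC; exact absurd hABC.1.symm hx
  | cons a A =>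
    simp at hABC
    exact ⟨A, B, C, hABC.2⟩

lemma before_mem_left {L : List ℕ} {x y : ℕ} (h : Before L x y) : x ∈ L := by
  obtain ⟨A, B, C, rfl⟩ := h; simp

lemma before_mem_right {L : List ℕ} {x y : ℕ} (h : Before L x y) : y ∈ L := by
  obtain ⟨A, B, C, rfl⟩ := h; simp

lemma both_orders {L : List ℕ} {x y : ℕ} (hx : x ∈ L) (hy : y ∈ L) (hxy : x ≠ y) :
    Before L x y ∨ Before L y x := by
  obtain ⟨A, B, rfl, _⟩ := mem_first_split hx
  rcases List.mem_append.mp hy with hyA | hyB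
  · obtain ⟨A1, A2, rfl, _⟩ := mem_first_split hyA
    right; exact ⟨A1, A2, B, by simp⟩
  · have hyB' : y ∈ B := by
      rcases List.mem_cons.mp hyB with h | h
      · exact absurd h.symm hxy
      · exact h
    obtain ⟨B1, B2, rfl, _⟩ := mem_first_split hyB'
    left; exact ⟨A, B1, B2, rfl⟩

lemma key_order : ∀ (P Q : List ℕ), P.Nodup → Q.Nodup → (∀ z, z ∈ P ↔ z ∈ Q) →
    (∀ x y, x ≠ y → Before P x y → Before Q x y) → Q = P := by
  intro P
  induction P with
  | nil =>
    intro Q _ _ hmem _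
    cases Q with
    | nil => rfl
    | cons q Q => exact absurd ((hmem q).mpr (by simp)) (by simp)
  | cons p P ih =>
    intro Q hP hQ hmem hord
    have hpQ : p ∈ Q := (hmem p).mp (by simp)
    obtain ⟨A, B, rfl, hpA⟩ := mem_first_split hpQ
    have hA : A = [] := by
      cases A with
      | nil => rfl
      | cons q A' =>
        exfalso
        have hqp : q ≠ p := by intro h; exact hpA (by simp [h])
        have hqP : q ∈ p :: P := (hmem q).mpr (by simp)
        have hqP' : q ∈ P := by
          rcases List.mem_cons.mp hqP with h | h
          · exact absurd h hqp
          · exact h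
        obtain ⟨A1, A2, rfl, _⟩ := mem_first_split hqP'
        have hbefore : Before ((q :: A') ++ p :: B) p q :=
          hord p q (fun h => hqp h.symm) ⟨[], A1, A2, by simp⟩
        obtain ⟨A2', B2, C2, hdec⟩ := hbefore
        have hqnot : q ∉ A' ++ p :: B := by
          have := hQ
          simp only [List.cons_append, List.nodup_cons] at this
          exact this.1
        cases A2' with
        | nil =>
          simp at hdec
          exact hqp hdec.1.symm.symm
        | cons r A2'' =>
          simp at hdec
          apply hqnot
          rw [hdec.2]
          simp
    subst hA
    simp only [List.nil_append] at *
    have hP' : P.Nodup := hP.of_cons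
    have hB : B.Nodup := hQ.of_cons
    have hpP : p ∉ P := by simp at hP; exact hP.1
    have hpB : p ∉ B := by simp at hQ; exact hQ.1
    have hmem' : ∀ z, z ∈ P ↔ z ∈ B := by
      intro z
      constructor
      · intro hz
        have : z ∈ p :: B := (hmem z).mp (by simp [hz])
        rcases List.mem_cons.mp this with h | h
        · exact absurd (h ▸ hz) hpP
        · exact h
      · intro hz
        have : z ∈ p :: P := (hmem z).mpr (by simp [hz])
        rcases List.mem_cons.mp this with h | h
        · exact absurd (h ▸ hz) hpB
        · exact h
    have hord' : ∀ x y, x ≠ y → Before P x y → Before B x y := by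
      intro x y hxy hb
      have hxP : x ∈ P := before_mem_left hb
      have hxp : x ≠ p := fun h => hpP (h ▸ hxP)
      exact before_uncons (hord x y hxy (before_cons hb)) hxp
    rw [ih B hP' hB hmem' hord']

lemma exists_first_filter {p : ℕ → Bool} {L : List ℕ} (h : L.filter p ≠ []) :
    ∃ B t R, L = B ++ t :: R ∧ B.filter p = [] ∧ p t = true := by
  induction L with
  | nil => simp at h
  | cons a L ih =>
    by_cases hpa : p a = true
    · exact ⟨[], a, L, rfl, rfl, hpa⟩
    · have : L.filter p ≠ [] := by
        intro h'; apply h; simp [List.filter_cons, hpa, h']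
      obtain ⟨B, t, R, rfl, hB, hpt⟩ := ih this
      exact ⟨a :: B, t, R, rfl, by simp [List.filter_cons, hpa, hB], hpt⟩

lemma filter_decomp {p : ℕ → Bool} : ∀ {L A B : List ℕ} {x : ℕ},
    L.filter p = A ++ x :: B → ∃ A' B', L = A' ++ x :: B' ∧ A'.filter p = A ∧ B'.filter p = B := by
  intro L
  induction L with
  | nil => intro A B x h; simp at h
  | cons a L ih =>
    intro A B x h
    by_cases hpa : p a = true
    · rw [List.filter_cons_of_pos hpa] at h
      cases A with
      | nil =>
        simp at h
        exact ⟨[], L, by simp [h.1], rfl, h.2⟩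
      | cons c A' =>
        simp at h
        obtain ⟨A'', B'', rfl, hA, hB⟩ := ih h.2
        exact ⟨a :: A'', B'', rfl, by rw [List.filter_cons_of_pos hpa, h.1, hA], hB⟩
    · rw [List.filter_cons_of_neg (by simpa using hpa)] at h
      obtain ⟨A'', B'', rfl, hA, hB⟩ := ih h
      exact ⟨a :: A'', B'', rfl, by simp [List.filter_cons, hpa, hA], hB⟩

end IsotermIC4
namespace IsotermIC4
open List

lemma get_at (P R : List ℕ) (x : ℕ) : (P ++ x :: R)[P.length]? = some x := by
  induction P with
  | nil => simp
  | cons a P ih => simpa using ih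

lemma sparse_mid {W : List ℕ} (hw : Sparse W) {P M S : List ℕ} {x : ℕ}
    (h : W = P ++ x :: (M ++ x :: S)) : ∃ y, W.count y = 1 ∧ y ∈ M := by
  have hassoc : W = (P ++ x :: M) ++ x :: S := by simp [h]
  have hi : W[P.length]? = some x := by rw [h]; exact get_at P _ x
  have hj : W[(P ++ x :: M).length]? = some x := by rw [hassoc]; exact get_at _ S x
  have hlt : P.length < (P ++ x :: M).length := by simp
  obtain ⟨y, hy1, hy2⟩ := hw x _ _ hlt hi hj
  refine ⟨y, hy1, ?_⟩
  have htake : W.take (P ++ x :: M).length = P ++ x :: M := by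
    rw [hassoc]; exact List.take_left
  have hdrop : (P ++ x :: M).drop (P.length + 1) = M := by
    have : P ++ x :: M = (P ++ [x]) ++ M := by simp
    rw [this]
    have hlen : (P ++ [x]).length = P.length + 1 := by simp
    rw [← hlen]
    exact List.drop_left
  rwa [htake, hdrop] at hy2

lemma block_nodup {W : List ℕ} (hw : Sparse W) {A M C : List ℕ}
    (hdec : W = A ++ (M ++ C)) (hM : ∀ y ∈ M, W.count y ≠ 1) : M.Nodup := by
  by_contra hnd
  rw [List.nodup_iff_count_le_one] at hnd
  push_neg at hnd
  obtain ⟨x, hx⟩ := hnd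
  have hxM : x ∈ M := by rw [← List.count_pos_iff]; omega
  obtain ⟨P, Q, rfl, hP⟩ := mem_first_split hxM
  have hxQ : x ∈ Q := by
    rw [← List.count_pos_iff]
    have hcnt := hx
    simp [List.count_append, List.count_cons] at hcnt
    have : List.count x P = 0 := List.count_eq_zero.mpr hP
    omega
  obtain ⟨Q1, Q2, rfl, _⟩ := mem_first_split hxQ
  have hW : W = (A ++ P) ++ x :: (Q1 ++ x :: (Q2 ++ C)) := by simp [hdec]
  obtain ⟨y, hy1, hy2⟩ := sparse_mid hw hW
  exact hM y (by simp [hy2]) hy1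

end IsotermIC4
namespace IsotermIC4
open List

lemma count_one_split {x : ℕ} {B : List ℕ} (h : B.count x = 1) :
    ∃ P S, B = P ++ x :: S ∧ x ∉ P ∧ x ∉ S := by
  have hx : x ∈ B := by rw [← List.count_pos_iff]; omega
  obtain ⟨P, S, rfl, hP⟩ := mem_first_split hx
  refine ⟨P, S, rfl, hP, ?_⟩
  rw [← List.count_eq_zero]
  have : List.count x P = 0 := List.count_eq_zero.mpr hP
  simp [List.count_append, List.count_cons] at h
  omega

lemma count_two_split {x : ℕ} {B : List ℕ} (h : 2 ≤ B.count x) :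
    ∃ P Q1 Q2, B = P ++ x :: (Q1 ++ x :: Q2) ∧ x ∉ P ∧ x ∉ Q1 := by
  have hx : x ∈ B := by rw [← List.count_pos_iff]; omega
  obtain ⟨P, S, rfl, hP⟩ := mem_first_split hx
  have hxS : x ∈ S := by
    rw [← List.count_pos_iff]
    have : List.count x P = 0 := List.count_eq_zero.mpr hP
    simp [List.count_append, List.count_cons] at h
    omega
  obtain ⟨Q1, Q2, rfl, hQ1⟩ := mem_first_split hxS
  exact ⟨P, Q1, Q2, rfl, hP, hQ1⟩

lemma order_split {B : List ℕ} {x y : ℕ} (hxy : x ≠ y) (hx : B.count x = 1) (hy : B.count y = 1)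
    (hb : Before B x y) :
    ∃ P M S, B = P ++ x :: (M ++ y :: S) ∧ x ∉ P ∧ x ∉ M ∧ x ∉ S ∧ y ∉ P ∧ y ∉ M ∧ y ∉ S := by
  obtain ⟨P, M, S, rfl⟩ := hb
  simp only [List.count_append, List.count_cons, beq_iff_eq, hxy, Ne.symm hxy,
    if_true, if_false, ite_true, ite_false] at hx hy
  refine ⟨P, M, S, rfl, ?_, ?_, ?_, ?_, ?_, ?_⟩ <;> rw [← List.count_eq_zero] <;>
    [skip; skip; skip; skip; skip; skip] <;> omega

lemma split3 {t x : ℕ} {P S : List ℕ} (h : t ∉ P ++ x :: S) : t ∉ P ∧ t ∉ S := by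
  simp only [List.mem_append, List.mem_cons, not_or] at h
  exact ⟨h.1, h.2.2⟩

/-! ### Test functions -/

def fT1 (x a : ℕ) : IC4 := if a = x then eA else 1
def fT2 (x y a : ℕ) : IC4 := if a = x then eA else if a = y then eB else 1
def fT3 (t x a : ℕ) : IC4 := if a = t then eA else if a = x then eX else 1

lemma T1val (x : ℕ) (U : List ℕ) :
    run (fT1 x) U (some 0) =
      if U.count x = 0 then some 0 else if U.count x = 1 then some 1 else none := by
  have hfix0 : ∀ {L : List ℕ}, x ∉ L → ∀ a ∈ L, (fT1 x a).toFun 0 = some 0 := by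
    intro L hL a ha
    have : a ≠ x := fun h => hL (h ▸ ha)
    simp [fT1, this, one_toFun]
  have hfix1 : ∀ {L : List ℕ}, x ∉ L → ∀ a ∈ L, (fT1 x a).toFun 1 = some 1 := by
    intro L hL a ha
    have : a ≠ x := fun h => hL (h ▸ ha)
    simp [fT1, this, one_toFun]
  have hx0 : (fT1 x x).toFun 0 = some 1 := by simp [fT1]; decide
  have hx1 : (fT1 x x).toFun 1 = none := by simp [fT1]; decide
  rcases Nat.lt_or_ge (U.count x) 2 with hc | hc
  · interval_cases hcv : U.count x
    · rw [if_pos rfl]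
      exact run_fix (hfix0 (by rw [← List.count_eq_zero]; omega))
    · rw [if_neg (by omega), if_pos rfl]
      obtain ⟨P, S, rfl, hP, hS⟩ := count_one_split hcv
      rw [runSeg P S (hfix0 hP) hx0]
      exact run_fix (hfix1 hS)
  · rw [if_neg (by omega), if_neg (by omega)]
    obtain ⟨P, Q1, Q2, rfl, hP, hQ1⟩ := count_two_split hc
    rw [runSeg P _ (hfix0 hP) hx0]
    exact runDead Q1 Q2 (hfix1 hQ1) hx1

lemma T2pos {x y : ℕ} {U : List ℕ} (hx : U.count x = 1) (hy : U.count y = 1)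
    (hxy : x ≠ y) (hb : Before U x y) : run (fT2 x y) U (some 0) = some 2 := by
  obtain ⟨P, M, S, rfl, hxP, hxM, hxS, hyP, hyM, hyS⟩ := order_split hxy hx hy hb
  have hfx : (fT2 x y x).toFun 0 = some 1 := by simp [fT2]; decide
  have hfy : (fT2 x y y).toFun 1 = some 2 := by simp [fT2, Ne.symm hxy]; decide
  have fix0 : ∀ a ∈ P, (fT2 x y a).toFun 0 = some 0 := by
    intro a ha
    have h1 : a ≠ x := fun h => hxP (h ▸ ha)
    have h2 : a ≠ y := fun h => hyP (h ▸ ha)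
    simp [fT2, h1, h2, one_toFun]
  have fix1 : ∀ a ∈ M, (fT2 x y a).toFun 1 = some 1 := by
    intro a ha
    have h1 : a ≠ x := fun h => hxM (h ▸ ha)
    have h2 : a ≠ y := fun h => hyM (h ▸ ha)
    simp [fT2, h1, h2, one_toFun]
  have fix2 : ∀ a ∈ S, (fT2 x y a).toFun 2 = some 2 := by
    intro a ha
    have h1 : a ≠ x := fun h => hxS (h ▸ ha)
    have h2 : a ≠ y := fun h => hyS (h ▸ ha)
    simp [fT2, h1, h2, one_toFun]
  rw [runSeg P _ fix0 hfx, runSeg M _ fix1 hfy]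
  exact run_fix fix2

lemma T2neg {x y : ℕ} {U : List ℕ} (hxy : x ≠ y) (hx : U.count x = 1) (hy : U.count y = 1)
    (hb : Before U y x) : run (fT2 x y) U (some 0) = none := by
  obtain ⟨P, M, S, rfl, hyP, _, _, hxP, _, _⟩ := order_split (Ne.symm hxy) hy hx hb
  have hfy : (fT2 x y y).toFun 0 = none := by
    simp [fT2, Ne.symm hxy]; decide
  have fix0 : ∀ a ∈ P, (fT2 x y a).toFun 0 = some 0 := by
    intro a ha
    have h1 : a ≠ x := fun h => hxP (h ▸ ha)
    have h2 : a ≠ y := fun h => hyP (h ▸ ha)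
    simp [fT2, h1, h2, one_toFun]
  exact runDead P _ fix0 hfy

lemma T3val {t x : ℕ} {E U : List ℕ} (hxt : x ≠ t) (htE : t ∉ E) (htU : t ∉ U) :
    run (fT3 t x) (E ++ t :: U) (some 0) =
      if U.count x = 0 then some 1 else if U.count x = 1 then some 2 else none := by
  have hft : (fT3 t x t).toFun 0 = some 1 := by simp [fT3]; decide
  have hfx1 : (fT3 t x x).toFun 1 = some 2 := by simp [fT3, hxt]; decide
  have hfx2 : (fT3 t x x).toFun 2 = none := by simp [fT3, hxt]; decide
  have fix0 : ∀ a ∈ E, (fT3 t x a).toFun 0 = some 0 := by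
    intro a ha
    have h1 : a ≠ t := fun h => htE (h ▸ ha)
    by_cases h2 : a = x
    · subst h2; simp [fT3, hxt]; decide
    · simp [fT3, h1, h2, one_toFun]
  have fix1 : ∀ {L : List ℕ}, t ∉ L → x ∉ L → ∀ a ∈ L, (fT3 t x a).toFun 1 = some 1 := by
    intro L h1 h2 a ha
    have ha1 : a ≠ t := fun h => h1 (h ▸ ha)
    have ha2 : a ≠ x := fun h => h2 (h ▸ ha)
    simp [fT3, ha1, ha2, one_toFun]
  have fix2 : ∀ {L : List ℕ}, t ∉ L → x ∉ L → ∀ a ∈ L, (fT3 t x a).toFun 2 = some 2 := by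
    intro L h1 h2 a ha
    have ha1 : a ≠ t := fun h => h1 (h ▸ ha)
    have ha2 : a ≠ x := fun h => h2 (h ▸ ha)
    simp [fT3, ha1, ha2, one_toFun]
  rw [runSeg E _ fix0 hft]
  rcases Nat.lt_or_ge (U.count x) 2 with hc | hc
  · interval_cases hcv : U.count x
    · rw [if_pos rfl]
      exact run_fix (fix1 htU (by rw [← List.count_eq_zero]; omega))
    · rw [if_neg (by omega), if_pos rfl]
      obtain ⟨P, S, rfl, hP, hS⟩ := count_one_split hcv
      obtain ⟨htP, htS⟩ := split3 htU
      rw [runSeg P S (fix1 htP hP) hfx1]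
      exact run_fix (fix2 htS hS)
  · rw [if_neg (by omega), if_neg (by omega)]
    obtain ⟨P, Q1, Q2, rfl, hP, hQ1⟩ := count_two_split hc
    obtain ⟨htP, htQ⟩ := split3 htU
    obtain ⟨htQ1, _⟩ := split3 htQ
    rw [runSeg P _ (fix1 htP hP) hfx1]
    exact runDead Q1 Q2 (fix2 htQ1 hQ1) hfx2

end IsotermIC4
namespace IsotermIC4
open List

def fT45a (x t' a : ℕ) : IC4 := if a = x then eE else if a = t' then eC else 1
def fT45b (x t' a : ℕ) : IC4 := if a = x then eG else if a = t' then eB else 1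
def fT6 (t x t' a : ℕ) : IC4 :=
  if a = t then eA else if a = x then eX else if a = t' then eC else 1
def fT7 (t x t' a : ℕ) : IC4 :=
  if a = t then eA else if a = x then eD else if a = t' then eB else 1
def fT8 (x y t' a : ℕ) : IC4 :=
  if a = x then eE else if a = y then eF else if a = t' then eC else 1
def fT9 (t x y t' a : ℕ) : IC4 :=
  if a = t then eA else if a = x then eX else if a = y then eY else if a = t' then eC else 1
def fT10 (t x y a : ℕ) : IC4 :=
  if a = t then eA else if a = x then eX else if a = y then eY else 1

lemma T45aval {x t' : ℕ} {B R : List ℕ} (hxt' : x ≠ t') (ht'B : t' ∉ B) (ht'R : t' ∉ R) :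
    run (fT45a x t') (B ++ t' :: R) (some 1) =
      if B.count x = 1 then some 3 else none := by
  have hfx1 : (fT45a x t' x).toFun 1 = some 2 := by simp [fT45a]; decide
  have hfx2 : (fT45a x t' x).toFun 2 = none := by simp [fT45a]; decide
  have hft'2 : (fT45a x t' t').toFun 2 = some 3 := by simp [fT45a, Ne.symm hxt']; decide
  have hft'1 : (fT45a x t' t').toFun 1 = none := by simp [fT45a, Ne.symm hxt']; decide
  have fix1 : ∀ {L : List ℕ}, t' ∉ L → x ∉ L → ∀ a ∈ L, (fT45a x t' a).toFun 1 = some 1 := by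
    intro L h1 h2 a ha
    have ha1 : a ≠ t' := fun h => h1 (h ▸ ha)
    have ha2 : a ≠ x := fun h => h2 (h ▸ ha)
    simp [fT45a, ha1, ha2, one_toFun]
  have fix2 : ∀ {L : List ℕ}, t' ∉ L → x ∉ L → ∀ a ∈ L, (fT45a x t' a).toFun 2 = some 2 := by
    intro L h1 h2 a ha
    have ha1 : a ≠ t' := fun h => h1 (h ▸ ha)
    have ha2 : a ≠ x := fun h => h2 (h ▸ ha)
    simp [fT45a, ha1, ha2, one_toFun]
  have fix3 : ∀ a ∈ R, (fT45a x t' a).toFun 3 = some 3 := by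
    intro a ha
    have ha1 : a ≠ t' := fun h => ht'R (h ▸ ha)
    by_cases h2 : a = x
    · subst h2; simp [fT45a]; decide
    · simp [fT45a, ha1, h2, one_toFun]
  rcases Nat.lt_or_ge (B.count x) 2 with hc | hc
  · interval_cases hcv : B.count x
    · rw [if_neg (by omega)]
      exact runDead B R (fix1 ht'B (by rw [← List.count_eq_zero]; omega)) hft'1
    · rw [if_pos rfl]
      obtain ⟨P, S, rfl, hP, hS⟩ := count_one_split hcv
      obtain ⟨h1, h2⟩ := split3 ht'B
      have hre : (P ++ x :: S) ++ t' :: R = P ++ x :: (S ++ t' :: R) := by simp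
      rw [hre, runSeg P _ (fix1 h1 hP) hfx1, runSeg S _ (fix2 h2 hS) hft'2]
      exact run_fix fix3
  · rw [if_neg (by omega)]
    obtain ⟨P, Q1, Q2, rfl, hP, hQ1⟩ := count_two_split hc
    obtain ⟨h1, h2⟩ := split3 ht'B
    obtain ⟨h3, _⟩ := split3 h2
    have hre : (P ++ x :: (Q1 ++ x :: Q2)) ++ t' :: R = P ++ x :: (Q1 ++ x :: (Q2 ++ t' :: R)) := by
      simp
    rw [hre, runSeg P _ (fix1 h1 hP) hfx1]
    exact runDead Q1 _ (fix2 h3 hQ1) hfx2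

lemma T45bval {x t' : ℕ} {B R : List ℕ} (hxt' : x ≠ t') (ht'B : t' ∉ B) (ht'R : t' ∉ R) :
    run (fT45b x t') (B ++ t' :: R) (some 1) =
      if B.count x = 0 then some 2 else none := by
  have hfx1 : (fT45b x t' x).toFun 1 = none := by simp [fT45b]; decide
  have hft'1 : (fT45b x t' t').toFun 1 = some 2 := by simp [fT45b, Ne.symm hxt']; decide
  have fix1 : ∀ {L : List ℕ}, t' ∉ L → x ∉ L → ∀ a ∈ L, (fT45b x t' a).toFun 1 = some 1 := by
    intro L h1 h2 a ha
    have ha1 : a ≠ t' := fun h => h1 (h ▸ ha)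
    have ha2 : a ≠ x := fun h => h2 (h ▸ ha)
    simp [fT45b, ha1, ha2, one_toFun]
  have fix2 : ∀ a ∈ R, (fT45b x t' a).toFun 2 = some 2 := by
    intro a ha
    have ha1 : a ≠ t' := fun h => ht'R (h ▸ ha)
    by_cases h2 : a = x
    · subst h2; simp [fT45b]; decide
    · simp [fT45b, ha1, h2, one_toFun]
  rcases Nat.eq_zero_or_pos (B.count x) with hc | hc
  · rw [if_pos hc]
    rw [runSeg B _ (fix1 ht'B (by rw [← List.count_eq_zero]; omega)) hft'1]
    exact run_fix fix2
  · rw [if_neg (by omega)]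
    have hx : x ∈ B := by rw [← List.count_pos_iff]; omega
    obtain ⟨P, S, rfl, hP⟩ := mem_first_split hx
    obtain ⟨h1, _⟩ := split3 ht'B
    have : (P ++ x :: S) ++ t' :: R = P ++ x :: (S ++ t' :: R) := by simp
    rw [this]
    exact runDead P _ (fix1 h1 hP) hfx1

lemma T6val {t x t' : ℕ} {E B R : List ℕ} (hxt : x ≠ t) (hxt' : x ≠ t') (ht't : t' ≠ t)
    (htE : t ∉ E) (ht'E : t' ∉ E) (htB : t ∉ B) (ht'B : t' ∉ B) (htR : t ∉ R) (ht'R : t' ∉ R) :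
    run (fT6 t x t') (E ++ t :: (B ++ t' :: R)) (some 0) =
      if B.count x = 1 then some 3 else none := by
  have hft : (fT6 t x t' t).toFun 0 = some 1 := by simp [fT6]; decide
  have hfx1 : (fT6 t x t' x).toFun 1 = some 2 := by simp [fT6, hxt]; decide
  have hfx2 : (fT6 t x t' x).toFun 2 = none := by simp [fT6, hxt]; decide
  have hft'2 : (fT6 t x t' t').toFun 2 = some 3 := by simp [fT6, ht't, Ne.symm hxt']; decide
  have hft'1 : (fT6 t x t' t').toFun 1 = none := by simp [fT6, ht't, Ne.symm hxt']; decide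
  have fix0 : ∀ a ∈ E, (fT6 t x t' a).toFun 0 = some 0 := by
    intro a ha
    have h1 : a ≠ t := fun h => htE (h ▸ ha)
    have h3 : a ≠ t' := fun h => ht'E (h ▸ ha)
    by_cases h2 : a = x
    · subst h2; simp [fT6, h1]; decide
    · simp [fT6, h1, h2, h3, one_toFun]
  have fix1 : ∀ {L : List ℕ}, t ∉ L → t' ∉ L → x ∉ L →
      ∀ a ∈ L, (fT6 t x t' a).toFun 1 = some 1 := by
    intro L h1 h2 h3 a ha
    have ha1 : a ≠ t := fun h => h1 (h ▸ ha)
    have ha2 : a ≠ t' := fun h => h2 (h ▸ ha)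
    have ha3 : a ≠ x := fun h => h3 (h ▸ ha)
    simp [fT6, ha1, ha2, ha3, one_toFun]
  have fix2 : ∀ {L : List ℕ}, t ∉ L → t' ∉ L → x ∉ L →
      ∀ a ∈ L, (fT6 t x t' a).toFun 2 = some 2 := by
    intro L h1 h2 h3 a ha
    have ha1 : a ≠ t := fun h => h1 (h ▸ ha)
    have ha2 : a ≠ t' := fun h => h2 (h ▸ ha)
    have ha3 : a ≠ x := fun h => h3 (h ▸ ha)
    simp [fT6, ha1, ha2, ha3, one_toFun]
  have fix3 : ∀ a ∈ R, (fT6 t x t' a).toFun 3 = some 3 := by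
    intro a ha
    have h1 : a ≠ t := fun h => htR (h ▸ ha)
    have h3 : a ≠ t' := fun h => ht'R (h ▸ ha)
    by_cases h2 : a = x
    · subst h2; simp [fT6, h1]; decide
    · simp [fT6, h1, h2, h3, one_toFun]
  rw [runSeg E _ fix0 hft]
  rcases Nat.lt_or_ge (B.count x) 2 with hc | hc
  · interval_cases hcv : B.count x
    · rw [if_neg (by omega)]
      exact runDead B R (fix1 htB ht'B (by rw [← List.count_eq_zero]; omega)) hft'1
    · rw [if_pos rfl]
      obtain ⟨P, S, rfl, hP, hS⟩ := count_one_split hcv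
      obtain ⟨h1, h2⟩ := split3 htB
      obtain ⟨h3, h4⟩ := split3 ht'B
      have hre : (P ++ x :: S) ++ t' :: R = P ++ x :: (S ++ t' :: R) := by simp
      rw [hre, runSeg P _ (fix1 h1 h3 hP) hfx1, runSeg S _ (fix2 h2 h4 hS) hft'2]
      exact run_fix fix3
  · rw [if_neg (by omega)]
    obtain ⟨P, Q1, Q2, rfl, hP, hQ1⟩ := count_two_split hc
    obtain ⟨h1, h2⟩ := split3 htB
    obtain ⟨h3, h4⟩ := split3 ht'B
    obtain ⟨h5, _⟩ := split3 h2
    obtain ⟨h6, _⟩ := split3 h4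
    have hre : (P ++ x :: (Q1 ++ x :: Q2)) ++ t' :: R = P ++ x :: (Q1 ++ x :: (Q2 ++ t' :: R)) := by
      simp
    rw [hre, runSeg P _ (fix1 h1 h3 hP) hfx1]
    exact runDead Q1 _ (fix2 h5 h6 hQ1) hfx2

lemma T7val {t x t' : ℕ} {E B R : List ℕ} (hxt : x ≠ t) (hxt' : x ≠ t') (ht't : t' ≠ t)
    (htE : t ∉ E) (ht'E : t' ∉ E) (htB : t ∉ B) (ht'B : t' ∉ B) (htR : t ∉ R) (ht'R : t' ∉ R) :
    run (fT7 t x t') (E ++ t :: (B ++ t' :: R)) (some 0) =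
      if B.count x = 0 then some 2 else none := by
  have hft : (fT7 t x t' t).toFun 0 = some 1 := by simp [fT7]; decide
  have hfx1 : (fT7 t x t' x).toFun 1 = none := by simp [fT7, hxt]; decide
  have hft'1 : (fT7 t x t' t').toFun 1 = some 2 := by simp [fT7, ht't, Ne.symm hxt']; decide
  have fix0 : ∀ a ∈ E, (fT7 t x t' a).toFun 0 = some 0 := by
    intro a ha
    have h1 : a ≠ t := fun h => htE (h ▸ ha)
    have h3 : a ≠ t' := fun h => ht'E (h ▸ ha)
    by_cases h2 : a = x
    · subst h2; simp [fT7, h1]; decide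
    · simp [fT7, h1, h2, h3, one_toFun]
  have fix1 : ∀ {L : List ℕ}, t ∉ L → t' ∉ L → x ∉ L →
      ∀ a ∈ L, (fT7 t x t' a).toFun 1 = some 1 := by
    intro L h1 h2 h3 a ha
    have ha1 : a ≠ t := fun h => h1 (h ▸ ha)
    have ha2 : a ≠ t' := fun h => h2 (h ▸ ha)
    have ha3 : a ≠ x := fun h => h3 (h ▸ ha)
    simp [fT7, ha1, ha2, ha3, one_toFun]
  have fix2 : ∀ a ∈ R, (fT7 t x t' a).toFun 2 = some 2 := by
    intro a ha
    have h1 : a ≠ t := fun h => htR (h ▸ ha)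
    have h3 : a ≠ t' := fun h => ht'R (h ▸ ha)
    by_cases h2 : a = x
    · subst h2; simp [fT7, h1]; decide
    · simp [fT7, h1, h2, h3, one_toFun]
  rw [runSeg E _ fix0 hft]
  rcases Nat.eq_zero_or_pos (B.count x) with hc | hc
  · rw [if_pos hc]
    rw [runSeg B _ (fix1 htB ht'B (by rw [← List.count_eq_zero]; omega)) hft'1]
    exact run_fix fix2
  · rw [if_neg (by omega)]
    have hx : x ∈ B := by rw [← List.count_pos_iff]; omega
    obtain ⟨P, S, rfl, hP⟩ := mem_first_split hx
    obtain ⟨h1, _⟩ := split3 htB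
    obtain ⟨h3, _⟩ := split3 ht'B
    have : (P ++ x :: S) ++ t' :: R = P ++ x :: (S ++ t' :: R) := by simp
    rw [this]
    exact runDead P _ (fix1 h1 h3 hP) hfx1

end IsotermIC4
namespace IsotermIC4
open List

lemma T8pos {x y t' : ℕ} {B R : List ℕ} (hxy : x ≠ y) (hxt' : x ≠ t') (hyt' : y ≠ t')
    (ht'B : t' ∉ B) (ht'R : t' ∉ R)
    (hx : B.count x = 1) (hy : B.count y = 1) (hb : Before B x y) :
    run (fT8 x y t') (B ++ t' :: R) (some 1) = some 3 := by
  obtain ⟨P, M, S, hBd, hxP, hxM, hxS, hyP, hyM, hyS⟩ := order_split hxy hx hy hb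
  subst hBd
  have hfx1 : (fT8 x y t' x).toFun 1 = some 2 := by simp [fT8]; decide
  have hfy2 : (fT8 x y t' y).toFun 2 = some 2 := by simp [fT8, Ne.symm hxy]; decide
  have hft'2 : (fT8 x y t' t').toFun 2 = some 3 := by
    simp [fT8, Ne.symm hxt', Ne.symm hyt']; decide
  have fix1 : ∀ a ∈ P, (fT8 x y t' a).toFun 1 = some 1 := by
    intro a ha
    have h1 : a ≠ x := fun h => hxP (h ▸ ha)
    have h2 : a ≠ y := fun h => hyP (h ▸ ha)
    have h3 : a ≠ t' := fun h => ht'B (h ▸ (by simp [ha] : a ∈ P ++ x :: (M ++ y :: S)))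
    simp [fT8, h1, h2, h3, one_toFun]
  have fix2 : ∀ {L : List ℕ}, x ∉ L → y ∉ L → t' ∉ L →
      ∀ a ∈ L, (fT8 x y t' a).toFun 2 = some 2 := by
    intro L h1 h2 h3 a ha
    have ha1 : a ≠ x := fun h => h1 (h ▸ ha)
    have ha2 : a ≠ y := fun h => h2 (h ▸ ha)
    have ha3 : a ≠ t' := fun h => h3 (h ▸ ha)
    simp [fT8, ha1, ha2, ha3, one_toFun]
  have fix3 : ∀ a ∈ R, (fT8 x y t' a).toFun 3 = some 3 := by
    intro a ha
    have h3 : a ≠ t' := fun h => ht'R (h ▸ ha)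
    by_cases h1 : a = x
    · subst h1; simp [fT8]; decide
    · by_cases h2 : a = y
      · subst h2; simp [fT8, Ne.symm hxy]; decide
      · simp [fT8, h1, h2, h3, one_toFun]
  obtain ⟨ht'P, ht'r⟩ := split3 ht'B
  obtain ⟨ht'M, ht'S⟩ := split3 ht'r
  have hre : (P ++ x :: (M ++ y :: S)) ++ t' :: R
      = P ++ x :: (M ++ y :: (S ++ t' :: R)) := by simp
  rw [hre, runSeg P _ fix1 hfx1, runSeg M _ (fix2 hxM hyM ht'M) hfy2,
    runSeg S _ (fix2 hxS hyS ht'S) hft'2]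
  exact run_fix fix3

lemma T8neg {x y t' : ℕ} {B R : List ℕ} (hxy : x ≠ y) (ht'B : t' ∉ B)
    (hx : B.count x = 1) (hy : B.count y = 1) (hb : Before B y x) :
    run (fT8 x y t') (B ++ t' :: R) (some 1) = none := by
  obtain ⟨P, M, S, hBd, hyP, _, _, hxP, _, _⟩ := order_split (Ne.symm hxy) hy hx hb
  subst hBd
  have hfy1 : (fT8 x y t' y).toFun 1 = none := by simp [fT8, Ne.symm hxy]; decide
  have fix1 : ∀ a ∈ P, (fT8 x y t' a).toFun 1 = some 1 := by
    intro a ha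
    have h1 : a ≠ x := fun h => hxP (h ▸ ha)
    have h2 : a ≠ y := fun h => hyP (h ▸ ha)
    have h3 : a ≠ t' := fun h => ht'B (h ▸ (by simp [ha] : a ∈ P ++ y :: (M ++ x :: S)))
    simp [fT8, h1, h2, h3, one_toFun]
  have hre : (P ++ y :: (M ++ x :: S)) ++ t' :: R
      = P ++ y :: ((M ++ x :: S) ++ t' :: R) := by simp
  rw [hre]
  exact runDead P _ fix1 hfy1

lemma T9pos {t x y t' : ℕ} {E B R : List ℕ} (hxy : x ≠ y) (hxt : x ≠ t) (hxt' : x ≠ t')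
    (hyt : y ≠ t) (hyt' : y ≠ t') (ht't : t' ≠ t)
    (htE : t ∉ E) (ht'E : t' ∉ E) (htB : t ∉ B) (ht'B : t' ∉ B) (htR : t ∉ R) (ht'R : t' ∉ R)
    (hx : B.count x = 1) (hy : B.count y = 1) (hb : Before B x y) :
    run (fT9 t x y t') (E ++ t :: (B ++ t' :: R)) (some 0) = some 3 := by
  obtain ⟨P, M, S, hBd, hxP, hxM, hxS, hyP, hyM, hyS⟩ := order_split hxy hx hy hb
  subst hBd
  have hft : (fT9 t x y t' t).toFun 0 = some 1 := by simp [fT9]; decide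
  have hfx1 : (fT9 t x y t' x).toFun 1 = some 2 := by simp [fT9, hxt]; decide
  have hfy2 : (fT9 t x y t' y).toFun 2 = some 2 := by simp [fT9, hyt, Ne.symm hxy]; decide
  have hft'2 : (fT9 t x y t' t').toFun 2 = some 3 := by
    simp [fT9, ht't, Ne.symm hxt', Ne.symm hyt']; decide
  have fix0 : ∀ a ∈ E, (fT9 t x y t' a).toFun 0 = some 0 := by
    intro a ha
    have h1 : a ≠ t := fun h => htE (h ▸ ha)
    have h4 : a ≠ t' := fun h => ht'E (h ▸ ha)
    by_cases h2 : a = x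
    · subst h2; simp [fT9, h1]; decide
    · by_cases h3 : a = y
      · subst h3; simp [fT9, hyt, Ne.symm hxy]; decide
      · simp [fT9, h1, h2, h3, h4, one_toFun]
  have fix12 : ∀ (s : St), s = 1 ∨ s = 2 → ∀ {L : List ℕ}, t ∉ L → t' ∉ L → x ∉ L → y ∉ L →
      ∀ a ∈ L, (fT9 t x y t' a).toFun s = some s := by
    intro s hs L h1 h2 h3 h4 a ha
    have ha1 : a ≠ t := fun h => h1 (h ▸ ha)
    have ha2 : a ≠ t' := fun h => h2 (h ▸ ha)
    have ha3 : a ≠ x := fun h => h3 (h ▸ ha)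
    have ha4 : a ≠ y := fun h => h4 (h ▸ ha)
    rcases hs with rfl | rfl <;> simp [fT9, ha1, ha2, ha3, ha4, one_toFun]
  have fix3 : ∀ a ∈ R, (fT9 t x y t' a).toFun 3 = some 3 := by
    intro a ha
    have h1 : a ≠ t := fun h => htR (h ▸ ha)
    have h4 : a ≠ t' := fun h => ht'R (h ▸ ha)
    by_cases h2 : a = x
    · subst h2; simp [fT9, h1]; decide
    · by_cases h3 : a = y
      · subst h3; simp [fT9, h1, Ne.symm hxy]; decide
      · simp [fT9, h1, h2, h3, h4, one_toFun]
  obtain ⟨htP, htr⟩ := split3 htB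
  obtain ⟨htM, htS⟩ := split3 htr
  obtain ⟨ht'P, ht'r⟩ := split3 ht'B
  obtain ⟨ht'M, ht'S⟩ := split3 ht'r
  have hre : E ++ t :: ((P ++ x :: (M ++ y :: S)) ++ t' :: R)
      = E ++ t :: (P ++ x :: (M ++ y :: (S ++ t' :: R))) := by simp
  rw [hre, runSeg E _ fix0 hft, runSeg P _ (fix12 1 (Or.inl rfl) htP ht'P hxP hyP) hfx1,
    runSeg M _ (fix12 2 (Or.inr rfl) htM ht'M hxM hyM) hfy2,
    runSeg S _ (fix12 2 (Or.inr rfl) htS ht'S hxS hyS) hft'2]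
  exact run_fix fix3

lemma T9neg {t x y t' : ℕ} {E B R : List ℕ} (hxy : x ≠ y) (hxt : x ≠ t) (hxt' : x ≠ t')
    (hyt : y ≠ t) (hyt' : y ≠ t') (ht't : t' ≠ t)
    (htE : t ∉ E) (ht'E : t' ∉ E) (htB : t ∉ B) (ht'B : t' ∉ B)
    (hx : B.count x = 1) (hy : B.count y = 1) (hb : Before B y x) :
    run (fT9 t x y t') (E ++ t :: (B ++ t' :: R)) (some 0) = none := by
  obtain ⟨P, M, S, hBd, hyP, _, _, hxP, _, _⟩ := order_split (Ne.symm hxy) hy hx hb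
  subst hBd
  have hft : (fT9 t x y t' t).toFun 0 = some 1 := by simp [fT9]; decide
  have hfy1 : (fT9 t x y t' y).toFun 1 = none := by simp [fT9, hyt, Ne.symm hxy]; decide
  have fix0 : ∀ a ∈ E, (fT9 t x y t' a).toFun 0 = some 0 := by
    intro a ha
    have h1 : a ≠ t := fun h => htE (h ▸ ha)
    have h4 : a ≠ t' := fun h => ht'E (h ▸ ha)
    by_cases h2 : a = x
    · subst h2; simp [fT9, h1]; decide
    · by_cases h3 : a = y
      · subst h3; simp [fT9, h1, Ne.symm hxy]; decide
      · simp [fT9, h1, h2, h3, h4, one_toFun]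
  obtain ⟨htP, _⟩ := split3 htB
  obtain ⟨ht'P, _⟩ := split3 ht'B
  have fix1 : ∀ a ∈ P, (fT9 t x y t' a).toFun 1 = some 1 := by
    intro a ha
    have h1 : a ≠ t := fun h => htP (h ▸ ha)
    have h4 : a ≠ t' := fun h => ht'P (h ▸ ha)
    have h2 : a ≠ x := fun h => hxP (h ▸ ha)
    have h3 : a ≠ y := fun h => hyP (h ▸ ha)
    simp [fT9, h1, h2, h3, h4, one_toFun]
  have hre : E ++ t :: ((P ++ y :: (M ++ x :: S)) ++ t' :: R)
      = E ++ t :: (P ++ y :: ((M ++ x :: S) ++ t' :: R)) := by simp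
  rw [hre, runSeg E _ fix0 hft]
  exact runDead P _ fix1 hfy1

lemma T10pos {t x y : ℕ} {E B : List ℕ} (hxy : x ≠ y) (hxt : x ≠ t) (hyt : y ≠ t)
    (htE : t ∉ E) (htB : t ∉ B)
    (hx : B.count x = 1) (hy : B.count y = 1) (hb : Before B x y) :
    run (fT10 t x y) (E ++ t :: B) (some 0) = some 2 := by
  obtain ⟨P, M, S, hBd, hxP, hxM, hxS, hyP, hyM, hyS⟩ := order_split hxy hx hy hb
  subst hBd
  have hft : (fT10 t x y t).toFun 0 = some 1 := by simp [fT10]; decide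
  have hfx1 : (fT10 t x y x).toFun 1 = some 2 := by simp [fT10, hxt]; decide
  have hfy2 : (fT10 t x y y).toFun 2 = some 2 := by simp [fT10, hyt, Ne.symm hxy]; decide
  have fix0 : ∀ a ∈ E, (fT10 t x y a).toFun 0 = some 0 := by
    intro a ha
    have h1 : a ≠ t := fun h => htE (h ▸ ha)
    by_cases h2 : a = x
    · subst h2; simp [fT10, h1]; decide
    · by_cases h3 : a = y
      · subst h3; simp [fT10, h1, Ne.symm hxy]; decide
      · simp [fT10, h1, h2, h3, one_toFun]
  obtain ⟨htP, htr⟩ := split3 htB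
  obtain ⟨htM, htS⟩ := split3 htr
  have fix1 : ∀ a ∈ P, (fT10 t x y a).toFun 1 = some 1 := by
    intro a ha
    have h1 : a ≠ t := fun h => htP (h ▸ ha)
    have h2 : a ≠ x := fun h => hxP (h ▸ ha)
    have h3 : a ≠ y := fun h => hyP (h ▸ ha)
    simp [fT10, h1, h2, h3, one_toFun]
  have fix2 : ∀ {L : List ℕ}, t ∉ L → x ∉ L → y ∉ L →
      ∀ a ∈ L, (fT10 t x y a).toFun 2 = some 2 := by
    intro L h1 h2 h3 a ha
    have ha1 : a ≠ t := fun h => h1 (h ▸ ha)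
    have ha2 : a ≠ x := fun h => h2 (h ▸ ha)
    have ha3 : a ≠ y := fun h => h3 (h ▸ ha)
    simp [fT10, ha1, ha2, ha3, one_toFun]
  rw [runSeg E _ fix0 hft, runSeg P _ fix1 hfx1, runSeg M _ (fix2 htM hxM hyM) hfy2]
  exact run_fix (fix2 htS hxS hyS)

lemma T10neg {t x y : ℕ} {E B : List ℕ} (hxy : x ≠ y) (hxt : x ≠ t) (hyt : y ≠ t)
    (htE : t ∉ E) (htB : t ∉ B)
    (hx : B.count x = 1) (hy : B.count y = 1) (hb : Before B y x) :
    run (fT10 t x y) (E ++ t :: B) (some 0) = none := by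
  obtain ⟨P, M, S, hBd, hyP, _, _, hxP, _, _⟩ := order_split (Ne.symm hxy) hy hx hb
  subst hBd
  have hft : (fT10 t x y t).toFun 0 = some 1 := by simp [fT10]; decide
  have hfy1 : (fT10 t x y y).toFun 1 = none := by simp [fT10, hyt, Ne.symm hxy]; decide
  have fix0 : ∀ a ∈ E, (fT10 t x y a).toFun 0 = some 0 := by
    intro a ha
    have h1 : a ≠ t := fun h => htE (h ▸ ha)
    by_cases h2 : a = x
    · subst h2; simp [fT10, h1]; decide
    · by_cases h3 : a = y
      · subst h3; simp [fT10, h1, Ne.symm hxy]; decide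
      · simp [fT10, h1, h2, h3, one_toFun]
  obtain ⟨htP, _⟩ := split3 htB
  have fix1 : ∀ a ∈ P, (fT10 t x y a).toFun 1 = some 1 := by
    intro a ha
    have h1 : a ≠ t := fun h => htP (h ▸ ha)
    have h2 : a ≠ x := fun h => hxP (h ▸ ha)
    have h3 : a ≠ y := fun h => hyP (h ▸ ha)
    simp [fT10, h1, h2, h3, one_toFun]
  rw [runSeg E _ fix0 hft]
  exact runDead P _ fix1 hfy1

end IsotermIC4
namespace IsotermIC4
open List

section Main

variable {W V : List ℕ}

lemma counts01 (HE : ∀ (f : ℕ → IC4) (s : St), run f W (some s) = run f V (some s)) :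
    ∀ z, (W.count z = 0 ↔ V.count z = 0) ∧ (W.count z = 1 ↔ V.count z = 1) := by
  intro z
  have h := HE (fT1 z) 0
  rw [T1val, T1val] at h
  split_ifs at h <;> simp_all [Fin.ext_iff]

lemma filter_lin_eq (hw : Sparse W)
    (HE : ∀ (f : ℕ → IC4) (s : St), run f W (some s) = run f V (some s)) :
    V.filter (fun z => decide (W.count z = 1)) = W.filter (fun z => decide (W.count z = 1)) := by
  set Lb : ℕ → Bool := fun z => decide (W.count z = 1) with hLb
  have hkey := counts01 HE
  apply key_order
  · -- W.filter Lb nodup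
    rw [List.nodup_iff_count_le_one]
    intro a
    by_cases ha : a ∈ W.filter Lb
    · have h1 : W.count a = 1 := by
        have := (List.mem_filter.mp ha).2
        simpa [hLb] using this
      calc (W.filter Lb).count a ≤ W.count a := (List.filter_sublist : W.filter Lb <+ W).count_le a
        _ = 1 := h1
    · rw [List.count_eq_zero.mpr ha]; omega
  · -- V.filter Lb nodup
    rw [List.nodup_iff_count_le_one]
    intro a
    by_cases ha : a ∈ V.filter Lb
    · have h1 : W.count a = 1 := by
        have := (List.mem_filter.mp ha).2
        simpa [hLb] using this
      have h2 : V.count a = 1 := (hkey a).2.mp h1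
      calc (V.filter Lb).count a ≤ V.count a := (List.filter_sublist : V.filter Lb <+ V).count_le a
        _ = 1 := h2
    · rw [List.count_eq_zero.mpr ha]; omega
  · -- same members
    intro z
    simp only [List.mem_filter, hLb, decide_eq_true_eq]
    constructor
    · rintro ⟨hz, hc⟩
      refine ⟨?_, hc⟩
      have hvz : V.count z = 1 := (hkey z).2.mp hc
      rw [← List.count_pos_iff]; omega
    · rintro ⟨hz, hc⟩
      refine ⟨?_, hc⟩
      rw [← List.count_pos_iff]; omega
  · -- order preserved
    intro x y hxy hb
    have hxm := before_mem_left hb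
    have hym := before_mem_right hb
    have hcx : W.count x = 1 := by
      have := (List.mem_filter.mp hxm).2; simpa [hLb] using this
    have hcy : W.count y = 1 := by
      have := (List.mem_filter.mp hym).2; simpa [hLb] using this
    have hcxV : V.count x = 1 := (hkey x).2.mp hcx
    have hcyV : V.count y = 1 := (hkey y).2.mp hcy
    -- lift Before from filter to W
    obtain ⟨A, B, C, hdec⟩ := hb
    obtain ⟨A', R', hWd, _, hR'⟩ := filter_decomp hdec
    obtain ⟨B', C', hRd, _, _⟩ := filter_decomp hR'
    have hbW : Before W x y := ⟨A', B', C', by rw [hWd, hRd]⟩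
    -- transfer to V via fT2
    have hbV : Before V x y := by
      by_contra hnb
      have hxV : x ∈ V := by rw [← List.count_pos_iff]; omega
      have hyV : y ∈ V := by rw [← List.count_pos_iff]; omega
      rcases both_orders hxV hyV hxy with h' | h'
      · exact hnb h'
      · have h1 := HE (fT2 x y) 0
        rw [T2pos hcx hcy hxy hbW, T2neg hxy hcxV hcyV h'] at h1
        exact nomatch h1
    -- push down to filter of V
    obtain ⟨A2, B2, C2, hVd⟩ := hbV
    refine ⟨A2.filter Lb, B2.filter Lb, C2.filter Lb, ?_⟩
    rw [hVd]
    have h1 : Lb x = true := by simp [hLb, hcx]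
    have h2 : Lb y = true := by simp [hLb, hcy]
    simp only [List.filter_append, List.filter_cons, h1, if_true, h2]

end Main
end IsotermIC4
namespace IsotermIC4
open List

lemma if_match1 {c d : Prop} [Decidable c] [Decidable d] {v : Option St} (hv : v ≠ none)
    (h : (if c then v else none) = (if d then v else none)) : c ↔ d := by
  constructor <;> intro hc
  · rw [if_pos hc] at h; by_contra hd; rw [if_neg hd] at h; exact hv h
  · rw [if_pos hc] at h; by_contra hd; rw [if_neg hd] at h; exact hv h.symm

lemma if_match3 {p q : ℕ}
    (h : (if p = 0 then some (1 : St) else if p = 1 then some 2 else none)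
       = (if q = 0 then some 1 else if q = 1 then some 2 else none)) :
    (p = 0 ↔ q = 0) ∧ (p = 1 ↔ q = 1) := by
  have key : ∀ p q : ℕ,
      (if p = 0 then some (1 : St) else if p = 1 then some 2 else none)
        = (if q = 0 then some 1 else if q = 1 then some 2 else none) →
      p = 0 → q = 0 := by
    intro p q h hc
    rw [if_pos hc] at h
    by_contra hq
    rw [if_neg hq] at h
    split_ifs at h <;> exact absurd h (by decide)
  have key1 : ∀ p q : ℕ,
      (if p = 0 then some (1 : St) else if p = 1 then some 2 else none)
        = (if q = 0 then some 1 else if q = 1 then some 2 else none) →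
      p = 1 → q = 1 := by
    intro p q h hc
    rw [if_neg (by omega), if_pos hc] at h
    by_contra hq
    by_cases h0 : q = 0
    · rw [if_pos h0] at h; exact absurd h (by decide)
    · rw [if_neg h0, if_neg hq] at h; exact absurd h (by decide)
  exact ⟨⟨key p q h, key q p h.symm⟩, ⟨key1 p q h, key1 q p h.symm⟩⟩

lemma main_lemma {W V : List ℕ} (hw : Sparse W)
    (HE : ∀ (f : ℕ → IC4) (s : St), run f W (some s) = run f V (some s)) : V = W := by
  set Lb : ℕ → Bool := fun z => decide (W.count z = 1) with hLb
  have hkey := counts01 HE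
  have hfil : V.filter Lb = W.filter Lb := filter_lin_eq hw HE
  have hVfil : ∀ (D W1 V1 : List ℕ), W = D ++ W1 → V = D ++ V1 →
      V1.filter Lb = W1.filter Lb := by
    intro D W1 V1 h1 h2
    have h3 := hfil
    rw [h1, h2, List.filter_append, List.filter_append] at h3
    exact List.append_cancel_left h3
  have main_ind : ∀ k (D W1 V1 : List ℕ), W = D ++ W1 → V = D ++ V1 →
      (W1.filter Lb).length = k →
      (D = [] ∨ ∃ E t, D = E ++ [t] ∧ W.count t = 1) → V1 = W1 := by
    intro k
    induction k with
    | zero =>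
      intro D W1 V1 hW hV hk hD
      have hW1f : W1.filter Lb = [] := List.length_eq_zero_iff.mp hk
      have hV1f : V1.filter Lb = [] := by rw [hVfil D W1 V1 hW hV, hW1f]
      have hnlW1 : ∀ z ∈ W1, W.count z ≠ 1 := by
        intro z hz hc
        have : z ∈ W1.filter Lb := List.mem_filter.mpr ⟨hz, by simp [hLb, hc]⟩
        rw [hW1f] at this; simp at this
      have hnlV1 : ∀ z ∈ V1, W.count z ≠ 1 := by
        intro z hz hc
        have : z ∈ V1.filter Lb := List.mem_filter.mpr ⟨hz, by simp [hLb, hc]⟩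
        rw [hV1f] at this; simp at this
      have hW1nd : W1.Nodup := block_nodup (A := D) (C := []) hw (by rw [hW]; simp) hnlW1
      rcases hD with rfl | ⟨E, t, rfl, htc⟩
      · simp only [List.nil_append] at hW hV
        have hWnil : W1 = [] := by
          cases hWc : W1 with
          | nil => rfl
          | cons a W1' =>
            exfalso
            have haW : a ∈ W := by rw [hW, hWc]; simp
            have hge : 2 ≤ W.count a := by
              have h1 : W.count a ≠ 1 := hnlW1 a (by rw [hWc]; simp)
              have h2 : 0 < W.count a := List.count_pos_iff.mpr haW
              omega
            obtain ⟨P, Q1, Q2, hdec, _, _⟩ := count_two_split hge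
            obtain ⟨y, hy1, hy2⟩ := sparse_mid hw hdec
            have hyW1 : y ∈ W1 := by rw [← hW, hdec]; simp [hy2]
            exact hnlW1 y hyW1 hy1
        have hVnil : V1 = [] := by
          cases hVc : V1 with
          | nil => rfl
          | cons b V1' =>
            exfalso
            have hbV : b ∈ V := by rw [hV, hVc]; simp
            have h0 : W.count b = 0 := by
              rw [List.count_eq_zero, hW, hWnil]; simp
            have h1 : V.count b = 0 := (hkey b).1.mp h0
            rw [List.count_eq_zero] at h1; exact h1 hbV
        rw [hWnil, hVnil]
      · have hWe : W = E ++ t :: W1 := by rw [hW]; simp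
        have hVe : V = E ++ t :: V1 := by rw [hV]; simp
        have htcW := htc; rw [hWe] at htcW
        obtain ⟨htE, htW1⟩ := count_zero_parts htcW
        have htVc : V.count t = 1 := (hkey t).2.mp htc
        have htVcV := htVc; rw [hVe] at htVcV
        obtain ⟨_, htV1⟩ := count_zero_parts htVcV
        have hcnt : ∀ x, x ≠ t →
            ((W1.count x = 0 ↔ V1.count x = 0) ∧ (W1.count x = 1 ↔ V1.count x = 1)) := by
          intro x hx
          have h := HE (fT3 t x) 0
          rw [hWe, hVe, T3val hx htE htW1, T3val hx htE htV1] at h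
          exact if_match3 h
        have hmm : ∀ z, z ∈ W1 ↔ z ∈ V1 := by
          intro z
          constructor
          · intro hz
            have hzt : z ≠ t := fun h => htW1 (h ▸ hz)
            have h1 : W1.count z = 1 := List.count_eq_one_of_mem hW1nd hz
            have h2 : V1.count z = 1 := ((hcnt z hzt).2).mp h1
            rw [← List.count_pos_iff]; omega
          · intro hz
            have hzt : z ≠ t := fun h => htV1 (h ▸ hz)
            have h1 : V1.count z ≠ 0 := fun h0 => (List.count_eq_zero.mp h0) hz
            have h2 : W1.count z ≠ 0 := fun h0 => h1 (((hcnt z hzt).1).mp h0)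
            rw [← List.count_pos_iff]; omega
        have hV1nd : V1.Nodup := by
          rw [List.nodup_iff_count_le_one]
          intro a
          by_cases ha : a ∈ V1
          · have h1 : a ∈ W1 := (hmm a).mpr ha
            have hat : a ≠ t := fun h => htV1 (h ▸ ha)
            have := ((hcnt a hat).2).mp (List.count_eq_one_of_mem hW1nd h1)
            omega
          · rw [List.count_eq_zero.mpr ha]; omega
        apply key_order W1 V1 hW1nd hV1nd hmm
        intro x y hxy hb
        have hx1 : x ∈ W1 := before_mem_left hb
        have hy1 : y ∈ W1 := before_mem_right hb
        have hxt : x ≠ t := fun h => htW1 (h ▸ hx1)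
        have hyt : y ≠ t := fun h => htW1 (h ▸ hy1)
        have hcx : W1.count x = 1 := List.count_eq_one_of_mem hW1nd hx1
        have hcy : W1.count y = 1 := List.count_eq_one_of_mem hW1nd hy1
        have hcxV : V1.count x = 1 := ((hcnt x hxt).2).mp hcx
        have hcyV : V1.count y = 1 := ((hcnt y hyt).2).mp hcy
        by_contra hnb
        have h' : Before V1 y x := by
          rcases both_orders ((hmm x).mp hx1) ((hmm y).mp hy1) hxy with h' | h'
          · exact absurd h' hnb
          · exact h'
        have h := HE (fT10 t x y) 0
        rw [hWe, hVe, T10pos hxy hxt hyt htE htW1 hcx hcy hb,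
          T10neg hxy hxt hyt htE htV1 hcxV hcyV h'] at h
        exact nomatch h
    | succ k ih =>
      intro D W1 V1 hW hV hk hD
      have hf1 : W1.filter Lb ≠ [] := by
        intro h; rw [h] at hk; simp at hk
      obtain ⟨B, t', W2, hW1d, hBf, ht'L⟩ := exists_first_filter hf1
      have hVf : V1.filter Lb = W1.filter Lb := hVfil D W1 V1 hW hV
      have hf1V : V1.filter Lb ≠ [] := by rw [hVf]; exact hf1
      obtain ⟨C, t'', V2, hV1d, hCf, ht''L⟩ := exists_first_filter hf1V
      have hWfil2 : W1.filter Lb = t' :: W2.filter Lb := by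
        rw [hW1d, List.filter_append, hBf, List.filter_cons_of_pos ht'L]; simp
      have hVfil2 : V1.filter Lb = t'' :: V2.filter Lb := by
        rw [hV1d, List.filter_append, hCf, List.filter_cons_of_pos ht''L]; simp
      have heads : t'' = t' ∧ V2.filter Lb = W2.filter Lb := by
        have h3 := hVf
        rw [hWfil2, hVfil2] at h3
        simpa using h3
      obtain ⟨heq, hV2f⟩ := heads
      rw [heq] at hV1d
      have ht'c : W.count t' = 1 := by simpa [hLb] using ht'L
      have hk2 : (W2.filter Lb).length = k := by
        rw [hWfil2] at hk; simpa using hk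
      have hWe2 : W = (D ++ B) ++ t' :: W2 := by rw [hW, hW1d]; simp
      have hVe2 : V = (D ++ C) ++ t' :: V2 := by rw [hV, hV1d]; simp
      have ht'cW := ht'c; rw [hWe2] at ht'cW
      obtain ⟨ht'DB, ht'W2⟩ := count_zero_parts ht'cW
      have ht'D : t' ∉ D := fun h => ht'DB (by simp [h])
      have ht'B : t' ∉ B := fun h => ht'DB (by simp [h])
      have ht'Vc : V.count t' = 1 := (hkey t').2.mp ht'c
      have ht'cV := ht'Vc; rw [hVe2] at ht'cV
      obtain ⟨ht'DC, ht'V2⟩ := count_zero_parts ht'cV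
      have ht'C : t' ∉ C := fun h => ht'DC (by simp [h])
      have hnlB : ∀ z ∈ B, W.count z ≠ 1 := by
        intro z hz hc
        have : z ∈ B.filter Lb := List.mem_filter.mpr ⟨hz, by simp [hLb, hc]⟩
        rw [hBf] at this; simp at this
      have hnlC : ∀ z ∈ C, W.count z ≠ 1 := by
        intro z hz hc
        have : z ∈ C.filter Lb := List.mem_filter.mpr ⟨hz, by simp [hLb, hc]⟩
        rw [hCf] at this; simp at this
      have hBnd : B.Nodup := block_nodup (A := D) (C := t' :: W2) hw (by rw [hW, hW1d]) hnlB
      rcases hD with rfl | ⟨E, t, hDe, htc⟩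
      · -- first block : D = []
        have hWe : W = B ++ t' :: W2 := by rw [hW, hW1d]; simp
        have hVe : V = C ++ t' :: V2 := by rw [hV, hV1d]; simp
        have hcnt1 : ∀ x, x ≠ t' → (B.count x = 1 ↔ C.count x = 1) := by
          intro x hx
          have h := HE (fT45a x t') 1
          rw [hWe, hVe, T45aval hx ht'B ht'W2, T45aval hx ht'C ht'V2] at h
          exact if_match1 (by decide) h
        have hcnt0 : ∀ x, x ≠ t' → (B.count x = 0 ↔ C.count x = 0) := by
          intro x hx
          have h := HE (fT45b x t') 1
          rw [hWe, hVe, T45bval hx ht'B ht'W2, T45bval hx ht'C ht'V2] at h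
          exact if_match1 (by decide) h
        have hmm : ∀ z, z ∈ B ↔ z ∈ C := by
          intro z
          constructor
          · intro hz
            have hzt : z ≠ t' := fun h => ht'B (h ▸ hz)
            have h1 : B.count z = 1 := List.count_eq_one_of_mem hBnd hz
            have h2 : C.count z = 1 := (hcnt1 z hzt).mp h1
            rw [← List.count_pos_iff]; omega
          · intro hz
            have hzt : z ≠ t' := fun h => ht'C (h ▸ hz)
            have h1 : C.count z ≠ 0 := fun h0 => (List.count_eq_zero.mp h0) hz
            have h2 : B.count z ≠ 0 := fun h0 => h1 ((hcnt0 z hzt).mp h0)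
            rw [← List.count_pos_iff]; omega
        have hCnd : C.Nodup := by
          rw [List.nodup_iff_count_le_one]
          intro a
          by_cases ha : a ∈ C
          · have h1 : a ∈ B := (hmm a).mpr ha
            have hat : a ≠ t' := fun h => ht'C (h ▸ ha)
            have := (hcnt1 a hat).mp (List.count_eq_one_of_mem hBnd h1)
            omega
          · rw [List.count_eq_zero.mpr ha]; omega
        have hCB : C = B := by
          apply key_order B C hBnd hCnd hmm
          intro x y hxy hb
          have hx1 : x ∈ B := before_mem_left hb
          have hy1 : y ∈ B := before_mem_right hb
          have hxt : x ≠ t' := fun h => ht'B (h ▸ hx1)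
          have hyt : y ≠ t' := fun h => ht'B (h ▸ hy1)
          have hcx : B.count x = 1 := List.count_eq_one_of_mem hBnd hx1
          have hcy : B.count y = 1 := List.count_eq_one_of_mem hBnd hy1
          have hcxV : C.count x = 1 := (hcnt1 x hxt).mp hcx
          have hcyV : C.count y = 1 := (hcnt1 y hyt).mp hcy
          by_contra hnb
          have h' : Before C y x := by
            rcases both_orders ((hmm x).mp hx1) ((hmm y).mp hy1) hxy with h' | h'
            · exact absurd h' hnb
            · exact h'
          have h := HE (fT8 x y t') 1
          rw [hWe, hVe, T8pos hxy hxt hyt ht'B ht'W2 hcx hcy hb,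
            T8neg hxy ht'C hcxV hcyV h'] at h
          exact nomatch h
        have hrec := ih (B ++ [t']) W2 V2 (by rw [hW, hW1d]; simp) (by rw [hV, hV1d, hCB]; simp)
          hk2 (Or.inr ⟨B, t', rfl, ht'c⟩)
        rw [hW1d, hV1d, hCB, hrec]
      · -- middle block : D = E ++ [t]
        subst hDe
        have hWe : W = E ++ t :: (B ++ t' :: W2) := by rw [hW, hW1d]; simp
        have hVe : V = E ++ t :: (C ++ t' :: V2) := by rw [hV, hV1d]; simp
        have htcW := htc; rw [hWe] at htcW
        obtain ⟨htE, htrest⟩ := count_zero_parts htcW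
        have htB : t ∉ B := fun h => htrest (by simp [h])
        have htt' : t' ≠ t := fun h => htrest (by simp [h])
        have htW2 : t ∉ W2 := fun h => htrest (by simp [h])
        have htVc : V.count t = 1 := (hkey t).2.mp htc
        have htcV := htVc; rw [hVe] at htcV
        obtain ⟨_, htrestV⟩ := count_zero_parts htcV
        have htC : t ∉ C := fun h => htrestV (by simp [h])
        have htV2 : t ∉ V2 := fun h => htrestV (by simp [h])
        have ht'E : t' ∉ E := fun h => ht'D (by simp [h])
        have hcnt1 : ∀ x, x ≠ t → x ≠ t' → (B.count x = 1 ↔ C.count x = 1) := by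
          intro x hxt hxt'
          have h := HE (fT6 t x t') 0
          rw [hWe, hVe, T6val hxt hxt' htt' htE ht'E htB ht'B htW2 ht'W2,
            T6val hxt hxt' htt' htE ht'E htC ht'C htV2 ht'V2] at h
          exact if_match1 (by decide) h
        have hcnt0 : ∀ x, x ≠ t → x ≠ t' → (B.count x = 0 ↔ C.count x = 0) := by
          intro x hxt hxt'
          have h := HE (fT7 t x t') 0
          rw [hWe, hVe, T7val hxt hxt' htt' htE ht'E htB ht'B htW2 ht'W2,
            T7val hxt hxt' htt' htE ht'E htC ht'C htV2 ht'V2] at h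
          exact if_match1 (by decide) h
        have hmm : ∀ z, z ∈ B ↔ z ∈ C := by
          intro z
          constructor
          · intro hz
            have hzt : z ≠ t := fun h => htB (h ▸ hz)
            have hzt' : z ≠ t' := fun h => ht'B (h ▸ hz)
            have h1 : B.count z = 1 := List.count_eq_one_of_mem hBnd hz
            have h2 : C.count z = 1 := (hcnt1 z hzt hzt').mp h1
            rw [← List.count_pos_iff]; omega
          · intro hz
            have hzt : z ≠ t := fun h => htC (h ▸ hz)
            have hzt' : z ≠ t' := fun h => ht'C (h ▸ hz)
            have h1 : C.count z ≠ 0 := fun h0 => (List.count_eq_zero.mp h0) hz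
            have h2 : B.count z ≠ 0 := fun h0 => h1 ((hcnt0 z hzt hzt').mp h0)
            rw [← List.count_pos_iff]; omega
        have hCnd : C.Nodup := by
          rw [List.nodup_iff_count_le_one]
          intro a
          by_cases ha : a ∈ C
          · have h1 : a ∈ B := (hmm a).mpr ha
            have hat : a ≠ t := fun h => htC (h ▸ ha)
            have hat' : a ≠ t' := fun h => ht'C (h ▸ ha)
            have := (hcnt1 a hat hat').mp (List.count_eq_one_of_mem hBnd h1)
            omega
          · rw [List.count_eq_zero.mpr ha]; omega
        have hCB : C = B := by
          apply key_order B C hBnd hCnd hmm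
          intro x y hxy hb
          have hx1 : x ∈ B := before_mem_left hb
          have hy1 : y ∈ B := before_mem_right hb
          have hxt : x ≠ t := fun h => htB (h ▸ hx1)
          have hyt : y ≠ t := fun h => htB (h ▸ hy1)
          have hxt' : x ≠ t' := fun h => ht'B (h ▸ hx1)
          have hyt' : y ≠ t' := fun h => ht'B (h ▸ hy1)
          have hcx : B.count x = 1 := List.count_eq_one_of_mem hBnd hx1
          have hcy : B.count y = 1 := List.count_eq_one_of_mem hBnd hy1
          have hcxV : C.count x = 1 := (hcnt1 x hxt hxt').mp hcx
          have hcyV : C.count y = 1 := (hcnt1 y hyt hyt').mp hcy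
          by_contra hnb
          have h' : Before C y x := by
            rcases both_orders ((hmm x).mp hx1) ((hmm y).mp hy1) hxy with h' | h'
            · exact absurd h' hnb
            · exact h'
          have h := HE (fT9 t x y t') 0
          rw [hWe, hVe,
            T9pos hxy hxt hxt' hyt hyt' htt' htE ht'E htB ht'B htW2 ht'W2 hcx hcy hb,
            T9neg hxy hxt hxt' hyt hyt' htt' htE ht'E htC ht'C hcxV hcyV h'] at h
          exact nomatch h
        have hrec := ih ((E ++ t :: B) ++ [t']) W2 V2 (by rw [hW, hW1d]; simp)
          (by rw [hV, hV1d, hCB]; simp) hk2 (Or.inr ⟨E ++ t :: B, t', rfl, ht'c⟩)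
        rw [hW1d, hV1d, hCB, hrec]
  exact main_ind (W.filter Lb).length [] W V (by simp) (by simp) rfl (Or.inl rfl)

end IsotermIC4
/-- **Every sparse word is an isoterm for the monoid `IC₄`**: if `w` is a sparse word and
`IC₄` satisfies the identity `w ≈ v`, then `v = w`. -/
theorem sparse_isoterm_IC4 (w v : FreeSemigroup ℕ) (hw : Sparse (wToList w))
    (h : Satisfies IC4 w v) : v = w := by
  have HE : ∀ (f : ℕ → IC4) (s : IsotermIC4.St),
      IsotermIC4.run f (wToList w) (some s) = IsotermIC4.run f (wToList v) (some s) := by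
    intro f s
    have e1 := IsotermIC4.lift_toFun f w.tail w.head s
    have e2 := IsotermIC4.lift_toFun f v.tail v.head s
    calc IsotermIC4.run f (wToList w) (some s)
        = (FreeSemigroup.lift f w).toFun s := e1.symm
      _ = (FreeSemigroup.lift f v).toFun s := by rw [h f]
      _ = IsotermIC4.run f (wToList v) (some s) := e2
  have hVW := IsotermIC4.main_lemma hw HE
  cases v with
  | mk vh vt =>
    cases w with
    | mk wh wt =>
      simp only [wToList] at hVW
      obtain ⟨h1, h2⟩ := List.cons.inj hVW
      rw [h1, h2]
end

section
/- A finite semigroup S does not belong to the pseudovariety DS if and only if the direct product S × S has the semigroup B_2 as a divisor. -/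
/-! ### Green's relations and the pseudovarieties `DS` and `LDS` -/

section Green
variable {S : Type*} [Semigroup S]

/-- The principal right ideal `xS¹ = {x} ∪ xS`. -/
def rIdeal (x : S) : Set S := insert x {z | ∃ u, x * u = z}

/-- The principal left ideal `S¹x = {x} ∪ Sx`. -/
def lIdeal (x : S) : Set S := insert x {z | ∃ u, u * x = z}

/-- Green's relation `R`: `x R y` iff `xS¹ = yS¹`. -/
def GreenR (x y : S) : Prop := rIdeal x = rIdeal y

/-- Green's relation `L`: `x L y` iff `S¹x = S¹y`. -/
def GreenL (x y : S) : Prop := lIdeal x = lIdeal y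

/-- Green's relation `D = R ∘ L`. -/
def GreenD (x y : S) : Prop := ∃ z, GreenR x z ∧ GreenL z y

/-- The local subsemigroup `eSe = {ese : s ∈ S}` of `S` (the local submonoid at `e` when `e`
is idempotent). -/
def localSub (e : S) : Subsemigroup S where
  carrier := {x | ∃ s : S, x = e * s * e}
  mul_mem' := by
    rintro a b ⟨s, rfl⟩ ⟨t, rfl⟩
    exact ⟨s * e * (e * t), by simp [mul_assoc]⟩

end Green

/-- Membership in the pseudovariety `DS`: every `D`-class containing an idempotent is closed
under multiplication. -/
def MemDS (S : Type*) [Semigroup S] [Finite S] : Prop :=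
  ∀ e x y : S, e * e = e → GreenD x e → GreenD y e → GreenD (x * y) e

/-- Membership in the pseudovariety `LDS`: every local submonoid `eSe` (for `e` idempotent)
lies in `DS`. -/
def MemLDS (S : Type*) [Semigroup S] [Finite S] : Prop :=
  ∀ e : S, e * e = e → MemDS (localSub e)

/-! ### The Brandt semigroup `B₂` and Brandt monoid `B₂¹` -/

/-- The five-element Brandt semigroup: the four `2 × 2` matrix units `E11, E12, E21, E22`
together with the zero matrix, under matrix multiplication. -/
def B2sub : Subsemigroup (Matrix (Fin 2) (Fin 2) (ZMod 2)) where
  carrier := {A | (∃ i j, A = Matrix.single i j 1) ∨ A = 0}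
  mul_mem' := by
    rintro a b (⟨i, j, rfl⟩ | rfl) hb
    · rcases hb with ⟨k, l, rfl⟩ | rfl
      · by_cases h : j = k
        · subst h
          exact Or.inl ⟨i, l, by rw [Matrix.single_mul_single_same]; norm_num⟩
        · exact Or.inr (by simp [h])
      · exact Or.inr (by simp)
    · exact Or.inr (by simp)

/-- The Brandt semigroup `B₂` as a type. -/
abbrev B2 := ↥B2sub

/-- The six-element Brandt monoid: `B₂` with the `2 × 2` identity matrix adjoined. -/
def B21sub : Subsemigroup (Matrix (Fin 2) (Fin 2) (ZMod 2)) where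
  carrier := {A | A = 1 ∨ (∃ i j, A = Matrix.single i j 1) ∨ A = 0}
  mul_mem' := by
    rintro a b (rfl | ⟨i, j, rfl⟩ | rfl) hb
    · simpa using hb
    · rcases hb with rfl | ⟨k, l, rfl⟩ | rfl
      · exact Or.inr (Or.inl ⟨i, j, by simp⟩)
      · by_cases h : j = k
        · subst h
          exact Or.inr (Or.inl ⟨i, l, by rw [Matrix.single_mul_single_same]; norm_num⟩)
        · exact Or.inr (Or.inr (by simp [h]))
      · exact Or.inr (Or.inr (by simp))
    · exact Or.inr (Or.inr (by simp))

/-- The Brandt monoid `B₂¹` as a type. -/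
abbrev B21 := ↥B21sub

/-- The identity matrix is the identity element of `B₂¹`. -/
instance : One B21 := ⟨⟨1, Or.inl rfl⟩⟩

/-- `T` is a divisor of `S`: `T` is a homomorphic image of a subsemigroup of `S`. -/
def IsDivisor (T S : Type*) [Semigroup T] [Semigroup S] : Prop :=
  ∃ (U : Subsemigroup S) (f : U →ₙ* T), Function.Surjective f


section GreenMonoid
variable {M : Type*} [Monoid M]

/-- `a ≤_R b` : `a ∈ bM`. -/
def leR (a b : M) : Prop := ∃ u, b * u = a
/-- `a ≤_L b` : `a ∈ Mb`. -/
def leL (a b : M) : Prop := ∃ u, u * b = a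
/-- `a ≤_J b` : `a ∈ MbM`. -/
def leJ (a b : M) : Prop := ∃ u v, u * b * v = a

theorem leR_refl (a : M) : leR a a := ⟨1, mul_one a⟩
theorem leL_refl (a : M) : leL a a := ⟨1, one_mul a⟩
theorem leJ_refl (a : M) : leJ a a := ⟨1, 1, by simp⟩

theorem leR_trans {a b c : M} (h1 : leR a b) (h2 : leR b c) : leR a c := by
  obtain ⟨u, rfl⟩ := h1; obtain ⟨v, rfl⟩ := h2; exact ⟨v * u, (mul_assoc _ _ _).symm⟩
theorem leL_trans {a b c : M} (h1 : leL a b) (h2 : leL b c) : leL a c := by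
  obtain ⟨u, rfl⟩ := h1; obtain ⟨v, rfl⟩ := h2; exact ⟨u * v, mul_assoc _ _ _⟩
theorem leJ_trans {a b c : M} (h1 : leJ a b) (h2 : leJ b c) : leJ a c := by
  obtain ⟨u, v, rfl⟩ := h1; obtain ⟨p, q, rfl⟩ := h2
  exact ⟨u * p, q * v, by simp [mul_assoc]⟩

theorem leR.toJ {a b : M} (h : leR a b) : leJ a b := by
  obtain ⟨u, rfl⟩ := h; exact ⟨1, u, by simp⟩
theorem leL.toJ {a b : M} (h : leL a b) : leJ a b := by
  obtain ⟨u, rfl⟩ := h; exact ⟨u, 1, by simp⟩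

theorem leJ_mul_right {a b : M} (c : M) (h : leJ a b) : leJ (a * c) b := by
  obtain ⟨u, v, rfl⟩ := h; exact ⟨u, v * c, by simp [mul_assoc]⟩
theorem leJ_mul_left {a b : M} (c : M) (h : leJ a b) : leJ (c * a) b := by
  obtain ⟨u, v, rfl⟩ := h; exact ⟨c * u, v, by simp [mul_assoc]⟩

/-- Green's `R` on a monoid. -/
def eqR (a b : M) : Prop := leR a b ∧ leR b a
/-- Green's `L` on a monoid. -/
def eqL (a b : M) : Prop := leL a b ∧ leL b a
/-- Green's `J` on a monoid. -/
def eqJ (a b : M) : Prop := leJ a b ∧ leJ b a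
/-- Green's `D` on a monoid. -/
def eqD (a b : M) : Prop := ∃ z, eqR a z ∧ eqL z b

theorem eqR_refl (a : M) : eqR a a := ⟨leR_refl a, leR_refl a⟩
theorem eqL_refl (a : M) : eqL a a := ⟨leL_refl a, leL_refl a⟩
theorem eqJ_refl (a : M) : eqJ a a := ⟨leJ_refl a, leJ_refl a⟩
theorem eqD_refl (a : M) : eqD a a := ⟨a, eqR_refl a, eqL_refl a⟩
theorem eqR_symm {a b : M} (h : eqR a b) : eqR b a := ⟨h.2, h.1⟩
theorem eqL_symm {a b : M} (h : eqL a b) : eqL b a := ⟨h.2, h.1⟩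
theorem eqJ_symm {a b : M} (h : eqJ a b) : eqJ b a := ⟨h.2, h.1⟩
theorem eqR_trans {a b c : M} (h1 : eqR a b) (h2 : eqR b c) : eqR a c :=
  ⟨leR_trans h1.1 h2.1, leR_trans h2.2 h1.2⟩
theorem eqL_trans {a b c : M} (h1 : eqL a b) (h2 : eqL b c) : eqL a c :=
  ⟨leL_trans h1.1 h2.1, leL_trans h2.2 h1.2⟩
theorem eqJ_trans {a b c : M} (h1 : eqJ a b) (h2 : eqJ b c) : eqJ a c :=
  ⟨leJ_trans h1.1 h2.1, leJ_trans h2.2 h1.2⟩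

/-- `L ∘ R ⊆ R ∘ L`. -/
theorem eqL_eqR_swap {a z b : M} (h1 : eqL a z) (h2 : eqR z b) : ∃ m, eqR a m ∧ eqL m b := by
  obtain ⟨⟨v, hv⟩, ⟨v', hv'⟩⟩ := h1   -- v * z = a, v' * a = z
  obtain ⟨⟨u, hu⟩, ⟨u', hu'⟩⟩ := h2   -- b * u = z, z * u' = b
  refine ⟨a * u', ⟨⟨u, ?_⟩, ⟨u', rfl⟩⟩, ⟨v, ?_⟩, ⟨v', ?_⟩⟩
  · -- a * u' * u = a
    have h : a * u' = v * b := by rw [← hv, ← hu', mul_assoc]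
    rw [h, mul_assoc, hu, hv]
  · -- v * b = a * u'
    rw [← hu', ← hv, mul_assoc]
  · -- v' * (a * u') = b
    rw [← mul_assoc, hv', hu']

theorem eqD_symm {a b : M} (h : eqD a b) : eqD b a := by
  obtain ⟨z, hr, hl⟩ := h
  obtain ⟨m, h1, h2⟩ := eqL_eqR_swap (eqL_symm hl) (eqR_symm hr)
  exact ⟨m, h1, h2⟩

theorem eqD_trans {a b c : M} (h1 : eqD a b) (h2 : eqD b c) : eqD a c := by
  obtain ⟨z1, hr1, hl1⟩ := h1
  obtain ⟨z2, hr2, hl2⟩ := h2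
  obtain ⟨m, hm1, hm2⟩ := eqL_eqR_swap hl1 hr2
  exact ⟨m, eqR_trans hr1 hm1, eqL_trans hm2 hl2⟩

theorem eqR.toD {a b : M} (h : eqR a b) : eqD a b := ⟨b, h, eqL_refl b⟩
theorem eqL.toD {a b : M} (h : eqL a b) : eqD a b := ⟨a, eqR_refl a, h⟩
theorem eqD.toJ {a b : M} (h : eqD a b) : eqJ a b := by
  obtain ⟨z, hr, hl⟩ := h
  exact eqJ_trans ⟨hr.1.toJ, hr.2.toJ⟩ ⟨hl.1.toJ, hl.2.toJ⟩

end GreenMonoid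

section FiniteMonoid
variable {M : Type*} [Monoid M]

theorem pow_stable_of_pow_eq {a : M} {i p : ℕ} (hp : 0 < p) (h : a ^ i = a ^ (i + p)) :
    ∀ m, i ≤ m → a ^ m = a ^ (m + p) := by
  intro m hm
  obtain ⟨d, rfl⟩ := Nat.exists_eq_add_of_le hm
  calc a ^ (i + d) = a ^ i * a ^ d := pow_add a i d
    _ = a ^ (i + p) * a ^ d := by rw [h]
    _ = a ^ (i + p + d) := (pow_add a (i + p) d).symm
    _ = a ^ (i + d + p) := by rw [show i + p + d = i + d + p from by omega]

theorem exists_idem_pow [Finite M] (a : M) : ∃ n, 0 < n ∧ a ^ n * a ^ n = a ^ n := by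
  obtain ⟨i, j, hne, hij⟩ := Finite.exists_ne_map_eq_of_infinite fun n : ℕ => a ^ n
  wlog hlt : i < j generalizing i j
  · exact this j i (Ne.symm hne) hij.symm (by omega)
  set p := j - i with hp
  have hpp : 0 < p := by omega
  have hbase : a ^ i = a ^ (i + p) := by rw [hp]; rw [Nat.add_sub_cancel' hlt.le]; exact hij
  have stable : ∀ m, i ≤ m → a ^ m = a ^ (m + p) := pow_stable_of_pow_eq hpp hbase
  have stablek : ∀ k m, i ≤ m → a ^ m = a ^ (m + k * p) := by
    intro k
    induction k with
    | zero => simp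
    | succ k ih =>
      intro m hm
      rw [ih m hm, stable (m + k * p) (by omega)]
      ring_nf
  refine ⟨(i + 1) * p, by positivity, ?_⟩
  rw [← pow_add]
  exact (stablek (i + 1) ((i + 1) * p) (by nlinarith)).symm

/-- If `p * y * q = y` then some common idempotent powers of `p` and `q` absorb into `y`. -/
theorem absorb [Finite M] {p y q : M} (h : p * y * q = y) :
    ∃ n, 0 < n ∧ p ^ n * p ^ n = p ^ n ∧ q ^ n * q ^ n = q ^ n ∧
      p ^ n * y = y ∧ y * q ^ n = y := by
  have iter : ∀ k, p ^ k * y * q ^ k = y := by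
    intro k
    induction k with
    | zero => simp
    | succ k ih =>
      calc p ^ (k+1) * y * q ^ (k+1) = p ^ k * (p * y * q) * q ^ k := by
            rw [pow_succ, pow_succ']
            simp [mul_assoc]
        _ = y := by rw [h]; exact ih
  obtain ⟨np, hnp, hp⟩ := exists_idem_pow p
  obtain ⟨nq, hnq, hq⟩ := exists_idem_pow q
  have idem_pow : ∀ (z : M) (n k : ℕ), 0 < k → z ^ n * z ^ n = z ^ n → (z ^ n) ^ k = z ^ n := by
    intro z n k hk hz
    induction k with
    | zero => omega
    | succ k ih =>
      rcases Nat.eq_zero_or_pos k with rfl | hk'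
      · simp
      · rw [pow_succ, ih hk', hz]
  refine ⟨np * nq, by positivity, ?_, ?_, ?_, ?_⟩
  · rw [pow_mul, idem_pow p np nq hnq hp]; exact hp
  · rw [mul_comm np nq, pow_mul, idem_pow q nq np hnp hq]; exact hq
  · set n := np * nq with hn
    have hidem : p ^ n * p ^ n = p ^ n := by rw [hn, pow_mul, idem_pow p np nq hnq hp]; exact hp
    calc p ^ n * y = p ^ n * (p ^ n * y * q ^ n) := by rw [iter n]
      _ = (p ^ n * p ^ n) * y * q ^ n := by simp [mul_assoc]
      _ = p ^ n * y * q ^ n := by rw [hidem]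
      _ = y := iter n
  · set n := np * nq with hn
    have hidem : q ^ n * q ^ n = q ^ n := by
      rw [hn, mul_comm np nq, pow_mul, idem_pow q nq np hnp hq]; exact hq
    calc y * q ^ n = (p ^ n * y * q ^ n) * q ^ n := by rw [iter n]
      _ = p ^ n * y * (q ^ n * q ^ n) := by simp [mul_assoc]
      _ = p ^ n * y * q ^ n := by rw [hidem]
      _ = y := iter n

/-- Stability: if `x ≤_R y` and `y ≤_J x` then `y ≤_R x`. -/
theorem stabR [Finite M] {x y : M} (h1 : leR x y) (h2 : leJ y x) : leR y x := by
  obtain ⟨t, ht⟩ := h1        -- y * t = x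
  obtain ⟨u, v, huv⟩ := h2    -- u * x * v = y
  have key : u * y * (t * v) = y := by rw [← mul_assoc, mul_assoc u y t, ht]; exact huv
  obtain ⟨n, hn, _, _, hpy, hyq⟩ := absorb key
  -- y = y * (t*v)^n = (y*t) * (v * (t*v)^(n-1))
  obtain ⟨n', rfl⟩ : ∃ n', n = n' + 1 := ⟨n - 1, by omega⟩
  refine ⟨v * (t * v) ^ n', ?_⟩
  calc x * (v * (t * v) ^ n') = y * ((t * v) * (t * v) ^ n') := by rw [← ht]; simp [mul_assoc]
    _ = y * (t * v) ^ (n' + 1) := by rw [← pow_succ']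
    _ = y := hyq

theorem stabL [Finite M] {x y : M} (h1 : leL x y) (h2 : leJ y x) : leL y x := by
  obtain ⟨t, ht⟩ := h1        -- t * y = x
  obtain ⟨u, v, huv⟩ := h2    -- u * x * v = y
  have key : (u * t) * y * v = y := by rw [mul_assoc u t y, ht]; exact huv
  obtain ⟨n, hn, _, _, hpy, hyq⟩ := absorb key
  obtain ⟨n', rfl⟩ : ∃ n', n = n' + 1 := ⟨n - 1, by omega⟩
  refine ⟨(u * t) ^ n' * u, ?_⟩
  calc (u * t) ^ n' * u * x = (u * t) ^ n' * (u * t) * y := by rw [← ht]; simp [mul_assoc]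
    _ = (u * t) ^ (n' + 1) * y := by rw [← pow_succ]
    _ = y := hpy

/-- In a finite monoid, `J`-equivalent elements are `D`-equivalent. -/
theorem eqJ.toD [Finite M] {x y : M} (h : eqJ x y) : eqD x y := by
  obtain ⟨⟨s, t, hst⟩, ⟨u, v, huv⟩⟩ := h   -- s * y * t = x, u * x * v = y
  -- key : (u*s) * y * (t*v) = y
  have key : (u * s) * y * (t * v) = y := by
    have h2 : u * (s * y * t) * v = y := by rw [hst]; exact huv
    calc (u * s) * y * (t * v) = u * (s * y * t) * v := by simp [mul_assoc]
      _ = y := h2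
  obtain ⟨n, hn, hpidem, _, hpy, hyq⟩ := absorb key
  obtain ⟨n', rfl⟩ : ∃ n', n = n' + 1 := ⟨n - 1, by omega⟩
  refine ⟨s * y, ⟨⟨t, hst⟩, ⟨v * (t * v) ^ n', ?_⟩⟩, ⟨⟨s, rfl⟩, ⟨u * (s * u) ^ n', ?_⟩⟩⟩
  · -- x * (v * (t*v)^n') = s * y
    calc x * (v * (t * v) ^ n') = s * (y * ((t * v) * (t * v) ^ n')) := by
          rw [← hst]; simp [mul_assoc]
      _ = s * (y * (t * v) ^ (n' + 1)) := by rw [← pow_succ']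
      _ = s * y := by rw [hyq]
  · -- (u * (s*u)^n') * (s * y) = y
    calc u * (s * u) ^ n' * (s * y) = (u * s) ^ (n' + 1) * y := by
          rw [pow_succ]
          have hsc : u * (s * u) ^ n' = (u * s) ^ n' * u :=
            (SemiconjBy.pow_right (by simp [SemiconjBy, mul_assoc]) n')
          rw [hsc]; simp [mul_assoc]
      _ = y := hpy

end FiniteMonoid
section Bridge
variable {S : Type*} [Semigroup S]

theorem coe_mul_ne_one (x : S) (u : WithOne S) : (x : WithOne S) * u ≠ 1 := by
  cases u using WithOne.recOneCoe 
  · simpa using WithOne.coe_ne_one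
  · rw [← WithOne.coe_mul]; exact WithOne.coe_ne_one

theorem one_ne_coe_mul (x : S) (u : WithOne S) : u * (x : S) ≠ 1 := by
  cases u using WithOne.recOneCoe 
  · simpa using WithOne.coe_ne_one
  · rw [← WithOne.coe_mul]; exact WithOne.coe_ne_one

theorem mem_rIdeal_iff {x z : S} : z ∈ rIdeal x ↔ leR (z : WithOne S) (x : WithOne S) := by
  constructor
  · rintro (rfl | ⟨u, rfl⟩)
    · exact leR_refl _
    · exact ⟨↑u, (WithOne.coe_mul x u).symm⟩
  · rintro ⟨u, hu⟩
    cases u using WithOne.recOneCoe 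
    · rw [mul_one] at hu; exact Or.inl (WithOne.coe_inj.mp hu).symm
    · rename_i u'
      rw [← WithOne.coe_mul] at hu
      exact Or.inr ⟨u', WithOne.coe_inj.mp hu⟩

theorem mem_lIdeal_iff {x z : S} : z ∈ lIdeal x ↔ leL (z : WithOne S) (x : WithOne S) := by
  constructor
  · rintro (rfl | ⟨u, rfl⟩)
    · exact leL_refl _
    · exact ⟨↑u, (WithOne.coe_mul u x).symm⟩
  · rintro ⟨u, hu⟩
    cases u using WithOne.recOneCoe 
    · rw [one_mul] at hu; exact Or.inl (WithOne.coe_inj.mp hu).symm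
    · rename_i u'
      rw [← WithOne.coe_mul] at hu
      exact Or.inr ⟨u', WithOne.coe_inj.mp hu⟩

theorem rIdeal_subset_iff {x y : S} : rIdeal x ⊆ rIdeal y ↔ leR (x : WithOne S) (y : WithOne S) := by
  constructor
  · intro h
    exact mem_rIdeal_iff.mp (h (Set.mem_insert x _))
  · intro h z hz
    exact mem_rIdeal_iff.mpr (leR_trans (mem_rIdeal_iff.mp hz) h)

theorem lIdeal_subset_iff {x y : S} : lIdeal x ⊆ lIdeal y ↔ leL (x : WithOne S) (y : WithOne S) := by
  constructor
  · intro h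
    exact mem_lIdeal_iff.mp (h (Set.mem_insert x _))
  · intro h z hz
    exact mem_lIdeal_iff.mpr (leL_trans (mem_lIdeal_iff.mp hz) h)

theorem greenR_iff {x y : S} : GreenR x y ↔ eqR (x : WithOne S) (y : WithOne S) := by
  rw [GreenR, Set.Subset.antisymm_iff, rIdeal_subset_iff, rIdeal_subset_iff]
  exact Iff.rfl

theorem greenL_iff {x y : S} : GreenL x y ↔ eqL (x : WithOne S) (y : WithOne S) := by
  rw [GreenL, Set.Subset.antisymm_iff, lIdeal_subset_iff, lIdeal_subset_iff]
  exact Iff.rfl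

theorem greenD_iff {x y : S} : GreenD x y ↔ eqD (x : WithOne S) (y : WithOne S) := by
  constructor
  · rintro ⟨z, hR, hL⟩
    exact ⟨↑z, greenR_iff.mp hR, greenL_iff.mp hL⟩
  · rintro ⟨m, hR, hL⟩
    cases m using WithOne.recOneCoe 
    · exact absurd hR.2.choose_spec (coe_mul_ne_one x _)
    · rename_i z
      exact ⟨z, greenR_iff.mpr hR, greenL_iff.mpr hL⟩

instance withOneFinite [Finite S] : Finite (WithOne S) := by
  have : Fintype S := Fintype.ofFinite S
  exact inferInstanceAs (Finite (Option S))

end Bridge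
section Build

/-- The five elements of `B₂` as matrix units. -/
def bE (i j : Fin 2) : B2 := ⟨Matrix.single i j 1, Or.inl ⟨i, j, rfl⟩⟩
/-- The zero of `B₂`. -/
def bO : B2 := ⟨0, Or.inr rfl⟩

theorem bO_mul (x : B2) : bO * x = bO := by
  apply Subtype.ext; show 0 * x.val = 0; simp

theorem mul_bO (x : B2) : x * bO = bO := by
  apply Subtype.ext; show x.val * 0 = 0; simp

theorem b2_cases (m : B2) : m = bE 0 0 ∨ m = bE 0 1 ∨ m = bE 1 0 ∨ m = bE 1 1 ∨ m = bO := by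
  obtain ⟨A, hA | rfl⟩ := m
  · obtain ⟨i, j, rfl⟩ := hA
    fin_cases i <;> fin_cases j
    · exact Or.inl rfl
    · exact Or.inr (Or.inl rfl)
    · exact Or.inr (Or.inr (Or.inl rfl))
    · exact Or.inr (Or.inr (Or.inr (Or.inl rfl)))
  · exact Or.inr (Or.inr (Or.inr (Or.inr rfl)))

theorem build_divisor {S : Type} [Semigroup S] (a b g h : S) (small : S → Prop)
    (hab : a * b = g) (hba : b * a = h) (hga : g * a = a) (hah : a * h = a)
    (hhb : h * b = b) (hbg : b * g = b) (hgg : g * g = g) (hhh : h * h = h)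
    (smul : ∀ u v : S, small u → small (u * v))
    (smur : ∀ u v : S, small u → small (v * u))
    (sbb : small (b * b))
    (hna : ¬ small a) (hnb : ¬ small b) (hng : ¬ small g) (hnh : ¬ small h) :
    IsDivisor B2 (S × S) := by
  classical
  have sgh : small (g * h) := by
    have e : g * h = a * (b * b) * a := by rw [← hab, ← hba]; simp [mul_assoc]
    rw [e]; exact smul _ _ (smur _ _ sbb)
  have sbh : small (b * h) := by
    have e : b * h = (b * b) * a := by rw [← hba, mul_assoc]
    rw [e]; exact smul _ _ sbb
  have sgb : small (g * b) := by
    have e : g * b = a * (b * b) := by rw [← hab, mul_assoc]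
    rw [e]; exact smur _ _ sbb
  set t : S × S := (a, b) with ht
  set s' : S × S := (b, a) with hs'
  set ts : S × S := (g, h) with hts
  set st : S × S := (h, g) with hst
  -- distinctness
  have ne_ts : t ≠ s' := fun e => by
    rw [ht, hs', Prod.mk.injEq] at e
    exact hng (by rw [← hab, e.1]; exact sbb)
  have ne_tts : t ≠ ts := fun e => by
    rw [ht, hts, Prod.mk.injEq] at e
    exact hng (by rw [← hab, e.1, e.2]; exact sgh)
  have ne_tst : t ≠ st := fun e => by
    rw [ht, hst, Prod.mk.injEq] at e
    exact hnh (by rw [← hba, e.1, e.2]; exact sgh)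
  have ne_sts : s' ≠ ts := fun e => by
    rw [hs', hts, Prod.mk.injEq] at e
    exact hnh (by rw [← hba, e.1, e.2]; exact sgh)
  have ne_sst : s' ≠ st := fun e => by
    rw [hs', hst, Prod.mk.injEq] at e
    exact hng (by rw [← hab, e.2, e.1]; exact sgh)
  have ne_tsst : ts ≠ st := fun e => by
    rw [hts, hst, Prod.mk.injEq] at e
    exact hng (by rw [show g = g * h from by rw [← e.1]; exact hgg.symm]; exact sgh)
  -- the Bad predicate
  set Bad : S × S → Prop := fun p => small p.1 ∨ small p.2 with hBad
  have badl : ∀ x y : S × S, Bad x → Bad (x * y) := by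
    rintro x y (hx | hx)
    · exact Or.inl (smul _ _ hx)
    · exact Or.inr (smul _ _ hx)
  have badr : ∀ x y : S × S, Bad y → Bad (x * y) := by
    rintro x y (hy | hy)
    · exact Or.inl (smur _ _ hy)
    · exact Or.inr (smur _ _ hy)
  have bad_ne : ∀ p : S × S, Bad p → p ≠ t ∧ p ≠ s' ∧ p ≠ ts ∧ p ≠ st := by
    rintro p hp
    refine ⟨?_, ?_, ?_, ?_⟩ <;> rintro rfl <;>
      rcases hp with hp | hp
    · exact hna hp
    · exact hnb hp
    · exact hnb hp
    · exact hna hp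
    · exact hng hp
    · exact hnh hp
    · exact hnh hp
    · exact hng hp
  -- the subsemigroup and the structure of its elements
  set U := Subsemigroup.closure {t, s'} with hU
  set Good : S × S → Prop := fun p => p = t ∨ p = s' ∨ p = ts ∨ p = st ∨ Bad p with hGood
  have mulGood : ∀ x y : S × S, Good x → Good y → Good (x * y) := by
    have pm : ∀ (p q : S × S), p * q = (p.1 * q.1, p.2 * q.2) := fun p q => rfl
    rintro x y (rfl | rfl | rfl | rfl | hx) (rfl | rfl | rfl | rfl | hy)
    -- t * _
    · exact Or.inr (Or.inr (Or.inr (Or.inr (Or.inr sbb))))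
    · exact Or.inr (Or.inr (Or.inl (Prod.ext hab hba)))
    · exact Or.inr (Or.inr (Or.inr (Or.inr (Or.inr sbh))))
    · exact Or.inl (Prod.ext hah hbg)
    · exact Or.inr (Or.inr (Or.inr (Or.inr (badr _ _ hy))))
    -- s' * _
    · exact Or.inr (Or.inr (Or.inr (Or.inl (Prod.ext hba hab))))
    · exact Or.inr (Or.inr (Or.inr (Or.inr (Or.inl sbb))))
    · exact Or.inr (Or.inl (Prod.ext hbg hah))
    · exact Or.inr (Or.inr (Or.inr (Or.inr (Or.inl sbh))))
    · exact Or.inr (Or.inr (Or.inr (Or.inr (badr _ _ hy))))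
    -- ts * _
    · exact Or.inl (Prod.ext hga hhb)
    · exact Or.inr (Or.inr (Or.inr (Or.inr (Or.inl sgb))))
    · exact Or.inr (Or.inr (Or.inl (Prod.ext hgg hhh)))
    · exact Or.inr (Or.inr (Or.inr (Or.inr (Or.inl sgh))))
    · exact Or.inr (Or.inr (Or.inr (Or.inr (badr _ _ hy))))
    -- st * _
    · exact Or.inr (Or.inr (Or.inr (Or.inr (Or.inr sgb))))
    · exact Or.inr (Or.inl (Prod.ext hhb hga))
    · exact Or.inr (Or.inr (Or.inr (Or.inr (Or.inr sgh))))
    · exact Or.inr (Or.inr (Or.inr (Or.inl (Prod.ext hhh hgg))))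
    · exact Or.inr (Or.inr (Or.inr (Or.inr (badr _ _ hy))))
    -- Bad * _
    all_goals exact Or.inr (Or.inr (Or.inr (Or.inr (badl _ _ hx))))
  have structure_lemma : ∀ p ∈ U, Good p := by
    intro p hp
    induction hp using Subsemigroup.closure_induction with
    | mem x hx => rcases hx with rfl | rfl
                  · exact Or.inl rfl
                  · exact Or.inr (Or.inl rfl)
    | mul x y hx hy ihx ihy => exact mulGood x y ihx ihy
  -- the map to B2
  set f : S × S → B2 := fun p =>
    if p = ts then bE 0 0 else if p = st then bE 1 1 else
    if p = t then bE 0 1 else if p = s' then bE 1 0 else bO with hf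
  have f_ts : f ts = bE 0 0 := if_pos rfl
  have f_st : f st = bE 1 1 := by
    rw [hf]; simp only [if_neg (Ne.symm ne_tsst), if_pos rfl, if_true]
  have f_t : f t = bE 0 1 := by
    rw [hf]; simp only [if_neg ne_tts, if_neg ne_tst, if_pos rfl, if_true]
  have f_s : f s' = bE 1 0 := by
    rw [hf]; simp only [if_neg ne_sts, if_neg ne_sst, if_neg (Ne.symm ne_ts), if_pos rfl, if_true]
  have f_bad : ∀ p, Bad p → f p = bO := by
    intro p hp
    obtain ⟨h1, h2, h3, h4⟩ := bad_ne p hp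
    rw [hf]; simp only [if_neg h3, if_neg h4, if_neg h1, if_neg h2]
  -- the table
  have table : ∀ x y : S × S, Good x → Good y → f (x * y) = f x * f y := by
    rintro x y (rfl | rfl | rfl | rfl | hx) (rfl | rfl | rfl | rfl | hy)
    · rw [f_bad _ (Or.inr sbb), f_t]; decide
    · rw [show t * s' = ts from Prod.ext hab hba, f_ts, f_t, f_s]; decide
    · rw [f_bad _ (Or.inr sbh), f_t, f_ts]; decide
    · rw [show t * st = t from Prod.ext hah hbg, f_t, f_st]; decide
    · rw [f_bad _ (badr _ _ hy), f_bad _ hy, f_t, mul_bO]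
    · rw [show s' * t = st from Prod.ext hba hab, f_st, f_s, f_t]; decide
    · rw [f_bad _ (Or.inl sbb), f_s]; decide
    · rw [show s' * ts = s' from Prod.ext hbg hah, f_s, f_ts]; decide
    · rw [f_bad _ (Or.inl sbh), f_s, f_st]; decide
    · rw [f_bad _ (badr _ _ hy), f_bad _ hy, f_s, mul_bO]
    · rw [show ts * t = t from Prod.ext hga hhb, f_t, f_ts]; decide
    · rw [f_bad _ (Or.inl sgb), f_ts, f_s]; decide
    · rw [show ts * ts = ts from Prod.ext hgg hhh, f_ts]; decide
    · rw [f_bad _ (Or.inl sgh), f_ts, f_st]; decide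
    · rw [f_bad _ (badr _ _ hy), f_bad _ hy, f_ts, mul_bO]
    · rw [f_bad _ (Or.inr sgb), f_st, f_t]; decide
    · rw [show st * s' = s' from Prod.ext hhb hga, f_s, f_st]; decide
    · rw [f_bad _ (Or.inr sgh), f_st, f_ts]; decide
    · rw [show st * st = st from Prod.ext hhh hgg, f_st]; decide
    · rw [f_bad _ (badr _ _ hy), f_bad _ hy, f_st, mul_bO]
    all_goals rw [f_bad _ (badl _ _ hx), f_bad _ hx, bO_mul]
  refine ⟨U, ⟨fun u => f u.val, fun u v => table u.val v.val
      (structure_lemma _ u.2) (structure_lemma _ v.2)⟩, ?_⟩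
  -- surjectivity
  have htU : t ∈ U := Subsemigroup.subset_closure (Set.mem_insert _ _)
  have hsU : s' ∈ U := Subsemigroup.subset_closure (Set.mem_insert_of_mem _ rfl)
  intro m
  rcases b2_cases m with rfl | rfl | rfl | rfl | rfl
  · exact ⟨⟨t * s', mul_mem htU hsU⟩, by
      show f (t * s') = _; rw [show t * s' = ts from Prod.ext hab hba, f_ts]⟩
  · exact ⟨⟨t, htU⟩, f_t⟩
  · exact ⟨⟨s', hsU⟩, f_s⟩
  · exact ⟨⟨s' * t, mul_mem hsU htU⟩, by
      show f (s' * t) = _; rw [show s' * t = st from Prod.ext hba hab, f_st]⟩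
  · exact ⟨⟨t * t, mul_mem htU htU⟩, by
      show f (t * t) = _; exact f_bad _ (Or.inr sbb)⟩

end Build
section Forward

theorem reg_of_eqD_idem {M : Type*} [Monoid M] {x e : M} (he : e * e = e) (h : eqD x e) :
    ∃ w, x * w * x = x := by
  obtain ⟨z, ⟨⟨p, hp⟩, ⟨q, hq⟩⟩, ⟨m, hm⟩, ⟨m', hm'⟩⟩ := h
  -- hp : z * p = x, hq : x * q = z, hm : m * e = z, hm' : m' * z = e
  have hze : z * e = z := by rw [← hm, mul_assoc, he]
  have hz : z * (m' * z) = z := by rw [hm']; exact hze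
  refine ⟨q * m', ?_⟩
  calc x * (q * m') * x = z * m' * x := by rw [← mul_assoc, hq]
    _ = z * m' * (z * p) := by rw [hp]
    _ = z * (m' * z) * p := by simp [mul_assoc]
    _ = z * p := by rw [hz]
    _ = x := hp

theorem not_memDS_divisor {S : Type} [Semigroup S] [Finite S] (hS : ¬ MemDS S) :
    IsDivisor B2 (S × S) := by
  rw [MemDS] at hS; push_neg at hS
  obtain ⟨e, x, y, he, hx, hy, hxy⟩ := hS
  have hxe : eqD (↑x : WithOne S) ↑e := greenD_iff.mp hx
  have hye : eqD (↑y : WithOne S) ↑e := greenD_iff.mp hy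
  have hee : (↑e : WithOne S) * ↑e = ↑e := by rw [← WithOne.coe_mul, he]
  obtain ⟨w, hw⟩ := reg_of_eqD_idem hee hxe
  obtain ⟨w', hw'⟩ := reg_of_eqD_idem hee hye
  obtain ⟨g', hg'⟩ : ∃ g' : WithOne S, g' = w * ↑x := ⟨_, rfl⟩
  obtain ⟨h', hh'⟩ : ∃ h' : WithOne S, h' = ↑y * w' := ⟨_, rfl⟩
  have hgg' : g' * g' = g' := by rw [hg']; rw [show w * ↑x * (w * ↑x) = w * (↑x * w * ↑x) by
    simp [mul_assoc], hw]
  have hhh' : h' * h' = h' := by rw [hh']; rw [show ↑y * w' * (↑y * w') = (↑y * w' * ↑y) * w' by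
    simp [mul_assoc], hw']
  have hxg : (↑x : WithOne S) * g' = ↑x := by rw [hg', ← mul_assoc, hw]
  have hhy : h' * ↑y = ↑y := by rw [hh']; exact hw'
  have hLgx : eqL g' (↑x : WithOne S) := ⟨⟨w, hg'.symm⟩, ⟨↑x, hxg⟩⟩
  have hRhy : eqR h' (↑y : WithOne S) := ⟨⟨w', hh'.symm⟩, ⟨↑y, hhy⟩⟩
  have heg : eqD g' ↑e := eqD_trans hLgx.toD hxe
  have heh : eqD h' ↑e := eqD_trans hRhy.toD hye
  have hgh : eqD g' h' := eqD_trans heg (eqD_symm heh)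
  have hnotJ : ¬ eqJ (g' * h') g' := by
    intro hJ
    apply hxy
    apply greenD_iff.mpr
    have j1 : eqJ ((↑x : WithOne S) * ↑y) (g' * h') := by
      constructor
      · exact ⟨↑x, ↑y, by rw [show (↑x : WithOne S) * (g' * h') * ↑y
          = (↑x * g') * (h' * ↑y) by simp [mul_assoc], hxg, hhy]⟩
      · exact ⟨w, w', by rw [hg', hh']; simp [mul_assoc]⟩
    have j2 : eqJ ((↑x : WithOne S) * ↑y) ↑e := eqJ_trans j1 (eqJ_trans hJ heg.toJ)
    have hD : eqD ((↑x : WithOne S) * ↑y) ↑e := j2.toD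
    rw [← WithOne.coe_mul] at hD
    exact hD
  -- extract coes
  have hghc := hgh
  obtain ⟨zM, hRz, hLz⟩ := hghc   -- eqR g' zM, eqL zM h'
  have hg0 : ∃ g₀ : S, g' = ↑g₀ := by
    cases w using WithOne.recOneCoe
    · exact ⟨x, by rw [hg', one_mul]⟩
    · rename_i w₀; exact ⟨w₀ * x, by rw [hg', WithOne.coe_mul]⟩
  obtain ⟨g₀, hg0⟩ := hg0
  have hh0 : ∃ h₀ : S, h' = ↑h₀ := by
    cases w' using WithOne.recOneCoe
    · exact ⟨y, by rw [hh', mul_one]⟩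
    · rename_i w₀; exact ⟨y * w₀, by rw [hh', WithOne.coe_mul]⟩
  obtain ⟨h₀, hh0⟩ := hh0
  have ha0 : ∃ a₀ : S, zM = ↑a₀ := by
    cases zM using WithOne.recOneCoe
    · obtain ⟨u, hu⟩ := hRz.2
      rw [hg0] at hu
      exact absurd hu (coe_mul_ne_one g₀ u)
    · rename_i z₀; exact ⟨z₀, rfl⟩
  obtain ⟨a₀, rfl⟩ := ha0
  obtain ⟨u, hu⟩ := hRz.1   -- ↑a₀ * u = g'
  obtain ⟨b', hb'⟩ : ∃ b' : WithOne S, b' = h' * u * ↑g₀ := ⟨_, rfl⟩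
  have hb0 : ∃ b₀ : S, b' = ↑b₀ := by
    cases hbe : (h' * u : WithOne S) using WithOne.recOneCoe
    · exact ⟨g₀, by rw [hb', hbe, one_mul]⟩
    · rename_i c₀; exact ⟨c₀ * g₀, by rw [hb', hbe, WithOne.coe_mul]⟩
  obtain ⟨b₀, hb0⟩ := hb0
  -- the eight equations in M
  have hge : g' * ↑g₀ = g' := by rw [← hg0]; exact hgg'
  have hga' : g' * ↑a₀ = ↑a₀ := by
    obtain ⟨p, hp⟩ := hRz.2   -- g' * p = ↑a₀
    rw [← hp, ← mul_assoc, hgg']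
  have hah' : (↑a₀ : WithOne S) * h' = ↑a₀ := by
    obtain ⟨m, hm⟩ := hLz.1   -- m * h' = ↑a₀
    rw [← hm, mul_assoc, hhh']
  have hab' : (↑a₀ : WithOne S) * b' = g' := by
    rw [hb', ← hg0]
    calc (↑a₀ : WithOne S) * (h' * u * g') = (↑a₀ * h') * u * g' := by simp [mul_assoc]
      _ = ↑a₀ * u * g' := by rw [hah']
      _ = g' * g' := by rw [hu]
      _ = g' := hgg'
  have hba' : b' * ↑a₀ = h' := by
    obtain ⟨q, hq⟩ := hLz.2   -- q * ↑a₀ = h'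
    rw [hb', ← hg0]
    calc h' * u * g' * ↑a₀ = h' * u * ↑a₀ := by rw [mul_assoc, hga']
      _ = q * (↑a₀ * u) * ↑a₀ := by rw [← hq]; simp [mul_assoc]
      _ = q * g' * ↑a₀ := by rw [hu]
      _ = q * ↑a₀ := by rw [mul_assoc, hga']
      _ = h' := hq
  have hhb' : h' * b' = b' := by
    rw [hb']
    calc h' * (h' * u * ↑g₀) = (h' * h') * u * ↑g₀ := by simp [mul_assoc]
      _ = h' * u * ↑g₀ := by rw [hhh']
  have hbg' : b' * ↑g₀ = b' := by
    rw [hb']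
    calc h' * u * ↑g₀ * ↑g₀ = h' * u * (g' * ↑g₀) := by rw [← hg0]; simp [mul_assoc]
      _ = h' * u * g' := by rw [hge, hg0]
      _ = h' * u * ↑g₀ := by rw [hg0]
  -- smallness
  obtain ⟨small, hsmall⟩ : ∃ small : S → Prop, small = fun c : S => leJ (c : WithOne S) (b' * b') := ⟨_, rfl⟩
  have smul : ∀ u v : S, small u → small (u * v) := by
    intro u v hu
    simp only [hsmall] at hu ⊢
    rw [WithOne.coe_mul]
    exact leJ_mul_right _ hu
  have smur : ∀ u v : S, small u → small (v * u) := by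
    intro u v hu
    simp only [hsmall] at hu ⊢
    rw [WithOne.coe_mul]
    exact leJ_mul_left _ hu
  have sbb : small (b₀ * b₀) := by
    simp only [hsmall, WithOne.coe_mul, ← hb0]; exact leJ_refl _
  have key : ∀ c : S, eqJ (↑c : WithOne S) g' → ¬ small c := by
    intro c hc hcs
    simp only [hsmall] at hcs
    have l1 : leJ (b' * b') (g' * h') := by
      refine ⟨b', b', ?_⟩
      calc b' * (g' * h') * b' = (b' * g') * (h' * b') := by simp [mul_assoc]
        _ = b' * b' := by rw [hg0, hbg', hhb']
    have l2 : leJ g' (g' * h') := leJ_trans (leJ_trans hc.2 hcs) l1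
    exact hnotJ ⟨⟨1, h', by rw [one_mul]⟩, l2⟩
  have eqJa : eqJ (↑a₀ : WithOne S) g' := eqJ_symm (eqD_symm (eqR_symm hRz).toD).toJ
  have eqJg : eqJ (↑g₀ : WithOne S) g' := by rw [← hg0]; exact eqJ_refl _
  have eqJh : eqJ (↑h₀ : WithOne S) g' := by rw [← hh0]; exact eqD.toJ (eqD_symm hgh)
  have eqJb : eqJ (↑b₀ : WithOne S) g' := by
    rw [← hb0]
    have l1 : leJ b' h' := ⟨1, u * ↑g₀, by rw [hb']; simp [mul_assoc]⟩
    have l2 : leJ h' b' := ⟨1, ↑a₀, by rw [one_mul, hba']⟩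
    exact eqJ_trans ⟨l1, l2⟩ (eqD.toJ (eqD_symm hgh))
  -- translate the eight equations to S
  have coeq : ∀ p q : S, (↑p : WithOne S) = ↑q → p = q := fun p q hpq => WithOne.coe_inj.mp hpq
  refine build_divisor a₀ b₀ g₀ h₀ small ?_ ?_ ?_ ?_ ?_ ?_ ?_ ?_ smul smur sbb
    (key a₀ eqJa) (key b₀ eqJb) (key g₀ eqJg) (key h₀ eqJh)
  · exact coeq _ _ (by rw [WithOne.coe_mul, ← hb0, hab', hg0])
  · exact coeq _ _ (by rw [WithOne.coe_mul, ← hb0, hba', hh0])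
  · exact coeq _ _ (by rw [WithOne.coe_mul, ← hg0, hga'])
  · exact coeq _ _ (by rw [WithOne.coe_mul, ← hh0, hah'])
  · exact coeq _ _ (by rw [WithOne.coe_mul, ← hh0, ← hb0, hhb', hb0])
  · exact coeq _ _ (by rw [WithOne.coe_mul, ← hb0, hbg', hb0])
  · exact coeq _ _ (by rw [WithOne.coe_mul, ← hg0, hgg', hg0])
  · exact coeq _ _ (by rw [WithOne.coe_mul, ← hh0, hhh', hh0])

end Forward
section Spow
variable {T : Type*} [Semigroup T]

/-- `spow x n = x ^ (n+1)` in a semigroup. -/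
def spow (x : T) : ℕ → T
  | 0 => x
  | n+1 => spow x n * x

theorem coe_spow (x : T) (n : ℕ) :
    ((spow x n : T) : WithOne T) = (x : WithOne T) ^ (n + 1) := by
  induction n with
  | zero => simp [spow]
  | succ n ih => rw [spow, WithOne.coe_mul, ih, ← pow_succ]

theorem spow_hom {T' : Type*} [Semigroup T'] (f : T →ₙ* T') (x : T) (n : ℕ) :
    f (spow x n) = spow (f x) n := by
  induction n with
  | zero => rfl
  | succ n ih => rw [spow, map_mul, ih]; rfl

theorem spow_fst {T' : Type*} [Semigroup T'] (p : T × T') (n : ℕ) :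
    (spow p n).1 = spow p.1 n := by
  induction n with
  | zero => rfl
  | succ n ih => rw [spow, spow, Prod.fst_mul, ih]

theorem spow_snd {T' : Type*} [Semigroup T'] (p : T × T') (n : ℕ) :
    (spow p n).2 = spow p.2 n := by
  induction n with
  | zero => rfl
  | succ n ih => rw [spow, spow, Prod.snd_mul, ih]

theorem idem_pow {M : Type*} [Monoid M] {w : M} (h : w * w = w) : ∀ k, w ^ (k + 1) = w := by
  intro k
  induction k with
  | zero => exact pow_one w
  | succ k ih => rw [pow_succ, ih, h]

theorem exists_spow_idem [Finite T] (x : T) : ∃ n, spow x n * spow x n = spow x n := by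
  obtain ⟨n, hn, hidem⟩ := exists_idem_pow (M := WithOne T) ↑x
  obtain ⟨n', rfl⟩ : ∃ n', n = n' + 1 := ⟨n - 1, by omega⟩
  refine ⟨n', WithOne.coe_inj.mp ?_⟩
  rw [WithOne.coe_mul, coe_spow]
  exact hidem

theorem spow_idem_unique (x : T) {n m : ℕ} (hn : spow x n * spow x n = spow x n)
    (hm : spow x m * spow x m = spow x m) : spow x n = spow x m := by
  apply WithOne.coe_inj.mp
  have hn' : ((x : WithOne T)) ^ (n+1) * (x : WithOne T) ^ (n+1) = (x : WithOne T) ^ (n+1) := by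
    rw [← coe_spow, ← WithOne.coe_mul, hn]
  have hm' : ((x : WithOne T)) ^ (m+1) * (x : WithOne T) ^ (m+1) = (x : WithOne T) ^ (m+1) := by
    rw [← coe_spow, ← WithOne.coe_mul, hm]
  calc ((spow x n : T) : WithOne T) = (x : WithOne T) ^ (n+1) := coe_spow x n
    _ = ((x : WithOne T) ^ (n+1)) ^ (m+1) := (idem_pow hn' m).symm
    _ = ((x : WithOne T) ^ (m+1)) ^ (n+1) := by rw [← pow_mul, ← pow_mul, Nat.mul_comm]
    _ = (x : WithOne T) ^ (m+1) := idem_pow hm' n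
    _ = ((spow x m : T) : WithOne T) := (coe_spow x m).symm

/-- The `ω`-condition characterizing `DS`: `((xy)^ω (yx)^ω (xy)^ω)^ω = (xy)^ω`. -/
def PhiProp (T : Type*) [Semigroup T] : Prop :=
  ∀ x y : T, ∀ n m k : ℕ,
    spow (x*y) n * spow (x*y) n = spow (x*y) n →
    spow (y*x) m * spow (y*x) m = spow (y*x) m →
    spow (spow (x*y) n * spow (y*x) m * spow (x*y) n) k *
      spow (spow (x*y) n * spow (y*x) m * spow (x*y) n) k =
      spow (spow (x*y) n * spow (y*x) m * spow (x*y) n) k →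
    spow (spow (x*y) n * spow (y*x) m * spow (x*y) n) k = spow (x*y) n

end Spow

section PhiTransfer

theorem phiProp_prod {A B : Type*} [Semigroup A] [Semigroup B]
    (hA : PhiProp A) (hB : PhiProp B) : PhiProp (A × B) := by
  intro x y n m k h1 h2 h3
  have c1 := congrArg Prod.fst h1
  have c2 := congrArg Prod.fst h2
  have c3 := congrArg Prod.fst h3
  have d1 := congrArg Prod.snd h1
  have d2 := congrArg Prod.snd h2
  have d3 := congrArg Prod.snd h3
  simp only [Prod.fst_mul, Prod.snd_mul, spow_fst, spow_snd] at c1 c2 c3 d1 d2 d3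
  apply Prod.ext
  · simp only [Prod.fst_mul, spow_fst]
    exact hA x.1 y.1 n m k c1 c2 c3
  · simp only [Prod.snd_mul, spow_snd]
    exact hB x.2 y.2 n m k d1 d2 d3

theorem phiProp_sub {A : Type*} [Semigroup A] (U : Subsemigroup A) (hA : PhiProp A) :
    PhiProp U := by
  intro x y n m k h1 h2 h3
  have c1 := congrArg (MulMemClass.subtype U) h1
  have c2 := congrArg (MulMemClass.subtype U) h2
  have c3 := congrArg (MulMemClass.subtype U) h3
  simp only [map_mul, spow_hom] at c1 c2 c3
  apply Subtype.ext
  show (MulMemClass.subtype U) (spow (spow (x*y) n * spow (y*x) m * spow (x*y) n) k)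
      = (MulMemClass.subtype U) (spow (x*y) n)
  simp only [map_mul, spow_hom]
  exact hA _ _ n m k c1 c2 c3

theorem phiProp_surj {A B : Type*} [Semigroup A] [Semigroup B] [Finite A]
    (f : A →ₙ* B) (hf : Function.Surjective f) (hA : PhiProp A) : PhiProp B := by
  intro x' y' n m k h1 h2 h3
  obtain ⟨x, rfl⟩ := hf x'
  obtain ⟨y, rfl⟩ := hf y'
  obtain ⟨N, hN⟩ := exists_spow_idem (x * y)
  obtain ⟨M2, hM⟩ := exists_spow_idem (y * x)
  obtain ⟨K, hK⟩ := exists_spow_idem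
    (spow (x*y) N * spow (y*x) M2 * spow (x*y) N)
  have main := hA x y N M2 K hN hM hK
  have push := congrArg f main
  have cN := congrArg f hN
  have cM := congrArg f hM
  have cK := congrArg f hK
  simp only [map_mul, spow_hom] at push cN cM cK
  -- identify the idempotent powers downstairs
  have hune : spow (f x * f y) n = spow (f x * f y) N := by
    apply spow_idem_unique _ h1 cN
  have hunf : spow (f y * f x) m = spow (f y * f x) M2 := by
    apply spow_idem_unique _ h2 cM
  rw [hune, hunf]
  rw [hune, hunf] at h3
  have idemK : spow (spow (f x * f y) N * spow (f y * f x) M2 * spow (f x * f y) N) K *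
      spow (spow (f x * f y) N * spow (f y * f x) M2 * spow (f x * f y) N) K =
      spow (spow (f x * f y) N * spow (f y * f x) M2 * spow (f x * f y) N) K := by
    rw [push]; exact cN
  rw [spow_idem_unique _ h3 idemK]
  exact push

end PhiTransfer
section Central

theorem mul_pow_shift {M : Type*} [Monoid M] (a b : M) (c : ℕ) :
    (a * b) ^ (c + 1) = a * (b * a) ^ c * b := by
  induction c with
  | zero => simp
  | succ c ih =>
    calc (a*b)^(c+2) = (a*b) * (a*b)^(c+1) := pow_succ' _ _
      _ = (a*b) * (a * (b*a)^c * b) := by rw [ih]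
      _ = a * ((b*a) * (b*a)^c) * b := by simp [mul_assoc]
      _ = a * (b*a)^(c+1) * b := by rw [← pow_succ']

theorem memDS_phiProp {S : Type} [Semigroup S] [Finite S] (hMem : MemDS S) : PhiProp S := by
  intro x y n m k he hf hg
  -- a `J`-comparison helper
  have half : ∀ (u v : S) (i j : ℕ),
      spow (u*v) i * spow (u*v) i = spow (u*v) i →
      leJ ((spow (u*v) i : S) : WithOne S) ((spow (v*u) j : S) : WithOne S) := by
    intro u v i j hi
    have hP : ((spow (u*v) i : S) : WithOne S) = ((u : WithOne S) * (v : WithOne S)) ^ (i+1) := by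
      rw [coe_spow, WithOne.coe_mul]
    have hQ : ((spow (v*u) j : S) : WithOne S) = ((v : WithOne S) * (u : WithOne S)) ^ (j+1) := by
      rw [coe_spow, WithOne.coe_mul]
    have hidem : (((u : WithOne S) * v)) ^ (i+1) * (((u : WithOne S) * v)) ^ (i+1)
        = (((u : WithOne S) * v)) ^ (i+1) := by
      rw [← hP, ← WithOne.coe_mul, hi]
    have big : (((u : WithOne S) * v)) ^ (i+1)
        = (((u : WithOne S) * v)) ^ ((i+1)*(j+3)) := by
      rw [pow_mul]
      exact (idem_pow hidem (j+2)).symm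
    have hge : j + 3 ≤ (i+1)*(j+3) := Nat.le_mul_of_pos_left (j+3) (by omega)
    have hsplit : (i+1)*(j+3) = ((i+1)*(j+3) - (j+2)) + (j+2) := by omega
    have hshift : (((u : WithOne S) * v)) ^ (j+2)
        = (u : WithOne S) * ((v : WithOne S) * u) ^ (j+1) * v := mul_pow_shift _ _ (j+1)
    refine ⟨(((u : WithOne S) * v)) ^ ((i+1)*(j+3) - (j+2)) * (u : WithOne S), ↑v, ?_⟩
    calc (((u : WithOne S) * v)) ^ ((i+1)*(j+3) - (j+2)) * (u : WithOne S) *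
          ((spow (v*u) j : S) : WithOne S) * ↑v
        = (((u : WithOne S) * v)) ^ ((i+1)*(j+3) - (j+2)) *
            ((u : WithOne S) * ((v : WithOne S) * u) ^ (j+1) * v) := by
          rw [hQ]; simp [mul_assoc]
      _ = (((u : WithOne S) * v)) ^ ((i+1)*(j+3) - (j+2)) * (((u : WithOne S) * v)) ^ (j+2) := by
          rw [hshift]
      _ = (((u : WithOne S) * v)) ^ (((i+1)*(j+3) - (j+2)) + (j+2)) := (pow_add _ _ _).symm
      _ = (((u : WithOne S) * v)) ^ ((i+1)*(j+3)) := by rw [← hsplit]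
      _ = (((u : WithOne S) * v)) ^ (i+1) := big.symm
      _ = ((spow (u*v) i : S) : WithOne S) := hP.symm
  have eJf : eqJ ((spow (x*y) n : S) : WithOne S) ((spow (y*x) m : S) : WithOne S) :=
    ⟨half x y n m he, half y x m n hf⟩
  have eDf : GreenD (spow (x*y) n) (spow (y*x) m) := greenD_iff.mpr eJf.toD
  have fDe : GreenD (spow (y*x) m) (spow (x*y) n) := greenD_iff.mpr (eqD_symm eJf.toD)
  have dRefl : ∀ z : S, GreenD z z := fun z => ⟨z, rfl, rfl⟩
  have d1 : GreenD (spow (x*y) n * spow (y*x) m) (spow (x*y) n) :=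
    hMem _ _ _ he (dRefl _) fDe
  have d2 : GreenD (spow (x*y) n * spow (y*x) m * spow (x*y) n) (spow (x*y) n) :=
    hMem _ _ _ he d1 (dRefl _)
  have dg : ∀ j, GreenD (spow (spow (x*y) n * spow (y*x) m * spow (x*y) n) j) (spow (x*y) n) := by
    intro j
    induction j with
    | zero => exact d2
    | succ j ih => exact hMem _ _ _ he ih d2
  -- absorption of e on both sides of g
  have hbl : spow (x*y) n * (spow (x*y) n * spow (y*x) m * spow (x*y) n)
      = spow (x*y) n * spow (y*x) m * spow (x*y) n := by
    rw [← mul_assoc, ← mul_assoc, he]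
  have hbr : (spow (x*y) n * spow (y*x) m * spow (x*y) n) * spow (x*y) n
      = spow (x*y) n * spow (y*x) m * spow (x*y) n := by
    rw [mul_assoc (spow (x*y) n * spow (y*x) m), he]
  have geq : ∀ j, spow (x*y) n * spow (spow (x*y) n * spow (y*x) m * spow (x*y) n) j
      = spow (spow (x*y) n * spow (y*x) m * spow (x*y) n) j := by
    intro j
    induction j with
    | zero => exact hbl
    | succ j ih =>
      simp only [spow]
      rw [← mul_assoc, ih]
  have gqe : ∀ j, spow (spow (x*y) n * spow (y*x) m * spow (x*y) n) j * spow (x*y) n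
      = spow (spow (x*y) n * spow (y*x) m * spow (x*y) n) j := by
    intro j
    induction j with
    | zero => exact hbr
    | succ j ih =>
      simp only [spow]
      rw [mul_assoc, hbr]
  -- conclusion via stability
  have gJ : eqJ ((spow (spow (x*y) n * spow (y*x) m * spow (x*y) n) k : S) : WithOne S)
      ((spow (x*y) n : S) : WithOne S) := (greenD_iff.mp (dg k)).toJ
  have hRge : leR ((spow (spow (x*y) n * spow (y*x) m * spow (x*y) n) k : S) : WithOne S)
      ((spow (x*y) n : S) : WithOne S) :=
    ⟨((spow (spow (x*y) n * spow (y*x) m * spow (x*y) n) k : S) : WithOne S),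
      by rw [← WithOne.coe_mul, geq k]⟩
  obtain ⟨u, hu⟩ := stabR hRge gJ.2
  apply WithOne.coe_inj.mp
  have hgg : ((spow (spow (x*y) n * spow (y*x) m * spow (x*y) n) k : S) : WithOne S) *
      ((spow (spow (x*y) n * spow (y*x) m * spow (x*y) n) k : S) : WithOne S) =
      ((spow (spow (x*y) n * spow (y*x) m * spow (x*y) n) k : S) : WithOne S) := by
    rw [← WithOne.coe_mul, hg]
  have h1 : ((spow (spow (x*y) n * spow (y*x) m * spow (x*y) n) k : S) : WithOne S) *
      ((spow (x*y) n : S) : WithOne S) =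
      ((spow (spow (x*y) n * spow (y*x) m * spow (x*y) n) k : S) : WithOne S) := by
    rw [← WithOne.coe_mul, gqe k]
  have h2 : ((spow (spow (x*y) n * spow (y*x) m * spow (x*y) n) k : S) : WithOne S) *
      ((spow (x*y) n : S) : WithOne S) = ((spow (x*y) n : S) : WithOne S) := by
    rw [← hu, ← mul_assoc, hgg]
  rw [← h1, h2]

end Central
section Final

theorem b2_not_phiProp : ¬ PhiProp B2 := by
  intro hP
  have := hP (bE 0 1) (bE 1 0) 0 0 0 (by decide) (by decide) (by decide)
  exact absurd this (by decide)

/-- **A finite semigroup `S` does not belong to the pseudovariety `DS` if and only if the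
direct product `S × S` has the Brandt semigroup `B₂` as a divisor.** -/
theorem not_memDS_iff_B2_divisor (S : Type) [Semigroup S] [Finite S] :
    ¬ MemDS S ↔ IsDivisor B2 (S × S) := by
  constructor
  · exact not_memDS_divisor
  · rintro ⟨U, f, hf⟩ hMem
    have h1 : PhiProp S := memDS_phiProp hMem
    have h2 : PhiProp (S × S) := phiProp_prod h1 h1
    have h3 : PhiProp U := phiProp_sub U h2
    have h4 : PhiProp B2 := phiProp_surj f hf h3
    exact b2_not_phiProp h4

end Final
end

section
/- The map sending each α ∈ IC_4 to the 4×4 matrix A over the two-element field with entries A_{ij} = 1 if iα = j and A_{ij} = 0 otherwise is an injective monoid homomorphism from IC_4 into the multiplicative monoid of upper triangular 4×4 matrices over the two-element field; in particular, IC_4 embeds into T_4(2). -/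
/-- The matrix `A` over `𝔽₂ = ZMod 2` associated with `α ∈ IC₄`: `A i j = 1` if `iα = j` and
`A i j = 0` otherwise. -/
def toMat (α : IC4) : Matrix (Fin 4) (Fin 4) (ZMod 2) :=
  Matrix.of fun i j => if α.toFun i = some j then 1 else 0

/-- **`IC₄` embeds into `T₄(2)`**: the map `α ↦ toMat α` is an injective monoid homomorphism
from `IC₄` into the multiplicative monoid of upper triangular `4 × 4` matrices over the
two-element field (its values are upper triangular, it is multiplicative, and it sends the
identity of `IC₄` to the identity matrix). -/
theorem IC4_embeds_T42 :
    Function.Injective toMat ∧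
    (∀ α β : IC4, toMat (α * β) = toMat α * toMat β) ∧
    toMat (1 : IC4) = 1 ∧
    ∀ α : IC4, (toMat α).BlockTriangular id := by
  refine ⟨?_, ?_, ?_, ?_⟩
  · intro α β h
    ext1; funext i
    have h' : ∀ j, toMat α i j = toMat β i j := fun j => by rw [h]
    cases hα : α.toFun i with
    | none =>
      cases hβ : β.toFun i with
      | none => rfl
      | some b =>
        have := h' b
        simp [toMat, hα, hβ] at this
    | some a =>
      cases hβ : β.toFun i with
      | none =>
        have := h' a
        simp [toMat, hα, hβ] at this
      | some b =>
        have := h' a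
        simp only [toMat, Matrix.of_apply, hα, hβ, if_pos rfl] at this
        by_cases hab : b = a
        · subst hab; rfl
        · rw [if_neg fun h => hab (Option.some_inj.mp h)] at this
          exact absurd this one_ne_zero
  · intro α β
    ext i j
    show (if (α.toFun i).bind β.toFun = some j then (1:ZMod 2) else 0)
        = ∑ k, toMat α i k * toMat β k j
    cases hα : α.toFun i with
    | none => simp [toMat, hα]
    | some a =>
      rw [Finset.sum_eq_single a]
      · simp [toMat, hα]
      · intro k _ hk; simp [toMat, hα, hk, Ne.symm hk]
      · simp
  · ext i j
    show (if (1:IC4).toFun i = some j then (1:ZMod 2) else 0) = _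
    have h1 : (1:IC4).toFun i = some i := rfl
    rw [h1, Matrix.one_apply]
    simp
  · intro α i j hji
    simp only [toMat, Matrix.of_apply]
    rw [if_neg]
    intro h
    exact absurd (α.extv' i j h) (not_le.mpr hji)
end

section
/- Green's relation D on the monoid IC_4 is the equality relation: for all α, β ∈ IC_4, if there exists γ ∈ IC_4 with α·IC_4 = γ·IC_4 and IC_4·γ = IC_4·β, then α = β. In other words, every D-class of IC_4 is a singleton. -/
namespace ICmon

theorem mul_toFun {m : ℕ} (α β : ICmon m) (i : Fin m) :
    (α * β).toFun i = (α.toFun i).bind β.toFun := rfl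

theorem greenR_triv {m : ℕ} (α γ : ICmon m) (h : GreenR α γ) : α = γ := by
  have hγ : γ ∈ rIdeal α := h ▸ Set.mem_insert γ _
  have hα : α ∈ rIdeal γ := h.symm ▸ Set.mem_insert α _
  rcases hγ with hγ | ⟨u, hu⟩
  · exact hγ.symm
  rcases hα with hα | ⟨v, hv⟩
  · exact hα
  -- α = α * (u * v)
  rw [← hu, mul_assoc] at hv
  have key : ∀ i a, α.toFun i = some a → u.toFun a = some a := by
    intro i a hia
    have : (α * (u * v)).toFun i = some a := by rw [hv, hia]
    rw [mul_toFun, hia, Option.bind_some, mul_toFun] at this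
    rcases Option.bind_eq_some_iff.mp this with ⟨b, hb, hba⟩
    have hab : a ≤ b := u.extv' _ _ hb
    have hba' : b ≤ a := v.extv' _ _ hba
    have : b = a := le_antisymm hba' hab
    rwa [this] at hb
  ext1; funext i
  rw [← hu, mul_toFun]
  cases hia : α.toFun i with
  | none => rfl
  | some a => rw [Option.bind_some, key i a hia]

theorem greenL_triv {m : ℕ} (γ β : ICmon m) (h : GreenL γ β) : γ = β := by
  have hβ : β ∈ lIdeal γ := h ▸ Set.mem_insert β _
  have hγ : γ ∈ lIdeal β := h.symm ▸ Set.mem_insert γ _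
  rcases hβ with hβ | ⟨u, hu⟩
  · exact hβ.symm
  rcases hγ with hγ | ⟨v, hv⟩
  · exact hγ
  -- β = (u * v) * β
  have hu2 := hu
  rw [← hv, ← mul_assoc] at hu
  have key : ∀ i a, β.toFun i = some a → u.toFun i = some i ∧ v.toFun i = some i := by
    intro i a hia
    have : ((u * v) * β).toFun i = some a := by rw [hu, hia]
    rw [mul_toFun, mul_toFun] at this
    rcases Option.bind_eq_some_iff.mp this with ⟨j, hj, hja⟩
    rcases Option.bind_eq_some_iff.mp hj with ⟨k, hk, hkj⟩
    have hik : i ≤ k := u.extv' _ _ hk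
    have hkj' : k ≤ j := v.extv' _ _ hkj
    have hja' : j ≤ a := β.extv' _ _ hja
    have hij : i = j := β.inj' _ _ _ hia hja
    have hki : k = i := le_antisymm (hij ▸ hkj') hik
    subst hki
    exact ⟨hk, hij ▸ hkj⟩
  ext1; funext i
  cases hib : β.toFun i with
  | none =>
    -- need γ.toFun i = none
    cases hig : γ.toFun i with
    | none => rfl
    | some a =>
      exfalso
      have : (v * β).toFun i = some a := by rw [hv, hig]
      rw [mul_toFun] at this
      rcases Option.bind_eq_some_iff.mp this with ⟨j, hj, hja⟩
      have hvj : v.toFun j = some j := (key j a hja).2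
      have hij : i = j := v.inj' _ _ _ hj hvj
      rw [hij, hja] at hib
      exact Option.some_ne_none _ hib
  | some a =>
    have hui : u.toFun i = some i := (key i a hib).1
    have : β.toFun i = (u * γ).toFun i := by rw [hu2]
    rw [mul_toFun, hui, Option.bind_some, hib] at this
    exact this.symm

end ICmon

/-- **Green's relation `D` on the monoid `IC₄` is the equality relation**: if there is
`γ ∈ IC₄` with `α·IC₄ = γ·IC₄` and `IC₄·γ = IC₄·β`, then `α = β`; every `D`-class of
`IC₄` is a singleton. -/
theorem IC4_GreenD_trivial (α β : IC4) (h : GreenD α β) : α = β := by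
  obtain ⟨γ, hR, hL⟩ := h
  exact (ICmon.greenR_triv α γ hR).trans (ICmon.greenL_triv γ β hL)
end
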